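/- arXiv:1204.3190 — 5 statements merged into one kernel-verified Lean document; each statement's English description precedes it below -/
import Mathlib

section
/- Let m ≥ −1 and ℓ ≥ 0 be integers, and let E_{m+1} = {U_i : i ∈ [m+1]} ∪ {V_i^{(j)} : i ∈ [m], j ∈ [ℓ]} be a sequence of mutually independent events such that for each i the events U_i, V_i^{(1)}, ..., V_i^{(ℓ)} each occur with probability u_i ∈ (0,1). If the sequence (u_i)_{i=1}^{m+1} is increasing in i, then the probability L_ℓ(m, u) that no L-gap occurs in E_{m+1} satisfies L_ℓ(m, u) ≥ ∏_{i=1}^{m+1} β_{ℓ+1}(u_i). -/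
open Filter

namespace Boot

noncomputable def beta (k : ℕ) (u : ℝ) : ℝ :=
  (1 - (1 - u) ^ k + Real.sqrt (1 + (4 * u - 2) * (1 - u) ^ k + (1 - u) ^ (2 * k))) / 2

/-- `g_k(x) = -log β_k(1 - e^{-x})`. -/
noncomputable def gfun (k : ℕ) (x : ℝ) : ℝ := - Real.log (beta k (1 - Real.exp (-x)))

lemma beta_facts {k : ℕ} {u : ℝ} (h0 : 0 < u) (h1 : u < 1) :
    beta k u ^ 2 = (1 - (1-u)^k) * beta k u + u * (1-u)^k ∧
    1 - (1-u)^k < beta k u ∧ beta k u < 1 := by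
  set q := (1-u)^k with hq
  have hq0 : 0 < q := pow_pos (by linarith) k
  have hq1 : q ≤ 1 := pow_le_one₀ (by linarith) (by linarith)
  have hrad : 1 + (4*u-2)*(1-u)^k + (1-u)^(2*k) = (1-q)^2 + 4*u*q := by
    rw [two_mul, pow_add, ← hq]; ring
  have hradnn : 0 ≤ (1-q)^2 + 4*u*q := by positivity
  have hb : beta k u = (1 - q + Real.sqrt ((1-q)^2 + 4*u*q)) / 2 := by
    rw [beta, hrad]
  set s := Real.sqrt ((1-q)^2 + 4*u*q) with hsdef
  have hs : s^2 = (1-q)^2 + 4*u*q := Real.sq_sqrt hradnn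
  have hsnn : 0 ≤ s := Real.sqrt_nonneg _
  have hspos : 0 < s := by nlinarith [mul_pos h0 hq0]
  have hsgt : 1 - q < s := by
    rcases le_or_gt (1 - q) 0 with h | h
    · linarith
    · nlinarith [mul_pos h0 hq0]
  have hslt : s < 1 + q := by
    nlinarith [mul_pos hq0 (sub_pos.mpr h1)]
  refine ⟨by rw [hb]; nlinarith [hs], by rw [hb]; linarith, by rw [hb]; linarith⟩

/-- For `k = L+1 ≥ 1`, `u < β_k(u) < 1`. -/

lemma beta_bounds {L : ℕ} {u : ℝ} (h0 : 0 < u) (h1 : u < 1) :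
    u < beta (L+1) u ∧ beta (L+1) u < 1 := by
  obtain ⟨-, h2, h3⟩ := beta_facts (k := L+1) h0 h1
  have hqle : (1-u)^(L+1) ≤ 1 - u := by
    calc (1-u)^(L+1) ≤ (1-u)^1 := pow_le_pow_of_le_one (by linarith) (by linarith) (by omega)
    _ = 1 - u := pow_one _
  exact ⟨by linarith, h3⟩

/-- Monotonicity: `u ↦ β(u)/u` is nonincreasing: for `u ≤ u'`, `β(u') u ≤ β(u) u'`. -/

lemma beta_mono_div {L : ℕ} {u u' : ℝ} (h0 : 0 < u) (h1' : u' < 1) (huu : u ≤ u') :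
    beta (L+1) u' * u ≤ beta (L+1) u * u' := by
  set k := L + 1 with hk
  have h1 : u < 1 := lt_of_le_of_lt huu h1'
  have h0' : 0 < u' := lt_of_lt_of_le h0 huu
  obtain ⟨hBsq, hBgt, hBlt⟩ := beta_facts (k := k) h0 h1
  obtain ⟨hB'sq, hB'gt, hB'lt⟩ := beta_facts (k := k) h0' h1'
  obtain ⟨hB'u, -⟩ := beta_bounds (L := L) h0' h1'
  obtain ⟨hBu, -⟩ := beta_bounds (L := L) h0 h1
  set q := (1-u)^k
  set q' := (1-u')^k
  set B := beta k u
  set B' := beta k u'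
  have hq0 : 0 < q := pow_pos (by linarith) k
  have hq'0 : 0 < q' := pow_pos (by linarith) k
  -- geometric sum identities
  have hgeo : ∀ x : ℝ, (1 - x) * (∑ i ∈ Finset.range k, x ^ i) = 1 - x ^ k := by
    intro x
    have := geom_sum_mul x k
    linarith [this]
  have hsum_le : (∑ i ∈ Finset.range k, (1-u') ^ i) ≤ ∑ i ∈ Finset.range k, (1-u) ^ i := by
    apply Finset.sum_le_sum
    intro i _
    exact pow_le_pow_left₀ (by linarith) (by linarith) i
  have hC : u * (1 - q') ≤ u' * (1 - q) := by
    have e1 : 1 - q = u * (∑ i ∈ Finset.range k, (1-u) ^ i) := by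
      have := hgeo (1-u); simp only [sub_sub_cancel] at this; linarith
    have e2 : 1 - q' = u' * (∑ i ∈ Finset.range k, (1-u') ^ i) := by
      have := hgeo (1-u'); simp only [sub_sub_cancel] at this; linarith
    rw [e1, e2]
    have : u * (u' * (∑ i ∈ Finset.range k, (1-u') ^ i)) ≤
        u * (u' * (∑ i ∈ Finset.range k, (1-u) ^ i)) := by
      apply mul_le_mul_of_nonneg_left _ (le_of_lt h0)
      exact mul_le_mul_of_nonneg_left hsum_le (le_of_lt h0')
    linarith [this]
  -- Claim 1 : (u B')² ≤ (1-q) (u B') u' + u q u'²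
  have hC2 : u * (1-q') - u' * (1-q) ≤ q * u' - u * q' := by nlinarith
  have step1 : u * B' * (u * (1-q') - u' * (1-q)) ≤ u * u' * (u * (1-q') - u' * (1-q)) := by
    apply mul_le_mul_of_nonpos_right _ (by linarith)
    nlinarith
  have step3 : u * u' * (u * (1-q') - u' * (1-q)) ≤ u * u' * (q * u' - u * q') :=
    mul_le_mul_of_nonneg_left hC2 (by positivity)
  have claim1 : (u*B')^2 ≤ (1-q) * (u*B') * u' + u * q * u'^2 := by
    have expand : (u*B')^2 - ((1-q) * (u*B') * u' + u * q * u'^2)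
        = u * B' * (u * (1-q') - u' * (1-q)) - u * u' * (q * u' - u * q') := by
      linear_combination u^2 * hB'sq
    linarith
  -- Claim 2 : quadratic comparison gives u B' ≤ B u'
  by_contra hcon
  push_neg at hcon
  have h2 : B * u' < u * B' := by linarith [hcon]
  have hYsq : (B*u')^2 = (1-q) * (B*u') * u' + u * q * u'^2 := by
    linear_combination u'^2 * hBsq
  have hfac : (u*B' - B*u') * (u*B' + B*u' - (1-q)*u') ≤ 0 := by nlinarith [claim1, hYsq]
  have hpos1 : 0 < u*B' - B*u' := by linarith
  have hpos2 : 0 < u*B' + B*u' - (1-q)*u' := by nlinarith [mul_pos h0 (lt_trans h0' hB'u), mul_pos (lt_trans h0 hBu) h0']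
  nlinarith [mul_pos hpos1 hpos2]

/-- The key step inequality: `(1-u)^{L+1} (β(u') - u') ≤ β(u') (1 - β(u))` for `u ≤ u'`. -/

lemma beta_step {L : ℕ} {u u' : ℝ} (h0 : 0 < u) (h1' : u' < 1) (huu : u ≤ u') :
    (1-u)^(L+1) * (beta (L+1) u' - u') ≤ beta (L+1) u' * (1 - beta (L+1) u) := by
  set k := L + 1 with hk
  have h1 : u < 1 := lt_of_le_of_lt huu h1'
  have h0' : 0 < u' := lt_of_lt_of_le h0 huu
  obtain ⟨hBsq, hBgt, hBlt⟩ := beta_facts (k := k) h0 h1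
  obtain ⟨hBu, -⟩ := beta_bounds (L := L) h0 h1
  obtain ⟨hB'u, -⟩ := beta_bounds (L := L) h0' h1'
  have hmono := beta_mono_div (L := L) h0 h1' huu
  set q := (1-u)^k
  set B := beta k u
  set B' := beta k u'
  have hBu' : u < B := hBu
  have hid : B * (1 - B) = q * (B - u) := by linear_combination -hBsq
  rw [← mul_le_mul_iff_left₀ (show (0:ℝ) < B - u by linarith)]
  calc q * (B' - u') * (B - u) = B * (1-B) * (B' - u') := by rw [hid]; ring
    _ ≤ B' * (1 - B) * (B - u) := by nlinarith [mul_nonneg (show (0:ℝ) ≤ 1 - B by linarith) (show (0:ℝ) ≤ B*u' - B'*u by linarith)]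

open MeasureTheory ProbabilityTheory MeasurableSpace in
/-- generic independence engine -/
lemma indep_key {Ω : Type*} [mΩ : MeasurableSpace Ω] (μ : Measure Ω) [IsProbabilityMeasure μ]
    {ι : Type*} [Countable ι] (S : ι → Set Ω) (hSmeas : ∀ i, MeasurableSet (S i))
    (hindep : iIndepSet S μ) (I : Set ι) (A : Set Ω)
    (hA : MeasurableSet[⨆ i ∈ I, generateFrom {S i}] A)
    (F : Finset ι) (hF : ∀ i ∈ F, i ∉ I) :
    μ (A ∩ ⋂ i ∈ F, (S i)ᶜ) = μ A * ∏ i ∈ F, μ ((S i)ᶜ) := by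
  have hindep' : iIndep (fun i => generateFrom {S i}) μ := (iIndepSet_iff_iIndep _ _).1 hindep
  have h_le : ∀ i, generateFrom {S i} ≤ mΩ := fun i =>
    generateFrom_le (by rintro t rfl; exact hSmeas i)
  have hind := indep_biSup_compl h_le hindep' I
  rw [Indep_iff] at hind
  have hB : MeasurableSet[⨆ i ∈ Iᶜ, generateFrom {S i}] (⋂ i ∈ F, (S i)ᶜ) := by
    apply MeasurableSet.biInter (Finset.countable_toSet F)
    intro i hi
    exact MeasurableSet.compl ((le_biSup (f := fun i => generateFrom {S i}) (hF i hi)) _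
      (measurableSet_generateFrom (Set.mem_singleton _)))
  rw [hind A _ hA hB]
  congr 1
  exact hindep'.meas_biInter (fun i _ => (measurableSet_generateFrom (Set.mem_singleton _)).compl)

open MeasureTheory ProbabilityTheory MeasurableSpace in
/-- **Lemma (Statement 2).** Let `N = m + 1` (so `m ≥ -1` corresponds to `N ≥ 0`), and let
`U : Fin N → Set Ω` and `V : Fin (N-1) → Fin L → Set Ω` be mutually independent events such
that `U i, V i 1, …, V i L` each occur with probability `u i`, with `(u i)` increasing.
Then the probability that no `L`-gap occurs (i.e. for every `i ∈ [N-1]` at least one of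
`U i, U (i+1), V i 1, …, V i L` occurs) is at least `∏ i, β_{L+1}(u i)`. -/
theorem no_Lgap_prob_ge {Ω : Type*} [MeasurableSpace Ω] (μ : Measure Ω)
    [IsProbabilityMeasure μ] (N L : ℕ)
    (U : Fin N → Set Ω) (V : Fin (N - 1) → Fin L → Set Ω)
    (hUmeas : ∀ i, MeasurableSet (U i)) (hVmeas : ∀ i j, MeasurableSet (V i j))
    (u : Fin N → ℝ) (hu : ∀ i, u i ∈ Set.Ioo (0 : ℝ) 1) (hmono : Monotone u)
    (hU : ∀ i, (μ (U i)).toReal = u i)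
    (hV : ∀ i j, (μ (V i j)).toReal = u (Fin.castLE (Nat.sub_le N 1) i))
    (hindep : iIndepSet (Sum.elim U fun x : Fin (N - 1) × Fin L => V x.1 x.2) μ) :
    ∏ i, beta (L + 1) (u i) ≤
      (μ {ω | ∀ i : Fin (N - 1),
          ω ∈ U (Fin.castLE (Nat.sub_le N 1) i) ∨
          ω ∈ U ⟨(i : ℕ) + 1, by have := i.isLt; omega⟩ ∨
          ∃ j, ω ∈ V i j}).toReal := by
  classical
  rcases Nat.eq_zero_or_pos N with rfl | hN1
  · have hempty : ∀ i : Fin (0 - 1), False := fun i => absurd i.2 (by omega)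
    have h1 : {ω : Ω | ∀ i : Fin (0 - 1),
        ω ∈ U (Fin.castLE (Nat.sub_le 0 1) i) ∨
        ω ∈ U ⟨(i : ℕ) + 1, by have := i.isLt; omega⟩ ∨
        ∃ j, ω ∈ V i j} = Set.univ := by
      ext ω; simp only [Set.mem_setOf_eq, Set.mem_univ, iff_true]
      exact fun i => absurd (hempty i) not_false
    rw [h1]
    simp
  -- main case N ≥ 1
  set ι := (Fin N ⊕ (Fin (N-1) × Fin L)) with hι
  set S : ι → Set Ω := Sum.elim U (fun x : Fin (N - 1) × Fin L => V x.1 x.2) with hS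
  have hSmeas : ∀ i, MeasurableSet (S i) := by
    rintro (i | ⟨i, j⟩)
    · exact hUmeas i
    · exact hVmeas i j
  -- ℕ-indexed versions of the data
  set uu : ℕ → ℝ := fun m => if h : m < N then u ⟨m, h⟩ else (1:ℝ)/2 with huu
  set UU : ℕ → Set Ω := fun m => if h : m < N then U ⟨m, h⟩ else ∅ with hUU
  set VV : ℕ → Set Ω := fun m => if h : m < N - 1 then ⋃ j, V ⟨m, h⟩ j else ∅ with hVV
  have huuv : ∀ (m : ℕ) (h : m < N), uu m = u ⟨m, h⟩ := fun m h => dif_pos h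
  have huIoo : ∀ (m : ℕ), m < N → 0 < uu m ∧ uu m < 1 := by
    intro m h; rw [huuv m h]; exact ⟨(hu _).1, (hu _).2⟩
  -- the prefix events
  set T : ℕ → Set Ω := fun n =>
    ⋂ (i : Fin (N-1)) (_ : (i : ℕ) + 2 ≤ n), (UU i ∪ (UU ((i : ℕ) + 1) ∪ VV i)) with hT
  have hUUm : ∀ m, MeasurableSet (UU m) := by
    intro m; rw [hUU]; dsimp only; split
    · exact hUmeas _
    · exact MeasurableSet.empty
  have hVVm : ∀ m, MeasurableSet (VV m) := by
    intro m; rw [hVV]; dsimp only; split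
    · exact MeasurableSet.iUnion (fun j => hVmeas _ j)
    · exact MeasurableSet.empty
  have hTmeas : ∀ n, MeasurableSet (T n) := by
    intro n
    exact MeasurableSet.iInter fun i => MeasurableSet.iInter fun _ =>
      ((hUUm _).union ((hUUm _).union (hVVm _)))
  have hUUS : ∀ (m : ℕ) (h : m < N), UU m = S (Sum.inl ⟨m, h⟩) := by
    intro m h; rw [hUU]; exact dif_pos h
  have hVVS : ∀ (m : ℕ) (h : m < N - 1), VV m = ⋃ j, S (Sum.inr (⟨m, h⟩, j)) := by
    intro m h; rw [hVV]; exact dif_pos h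
  -- the target set is `T N`
  have htarget : {ω | ∀ i : Fin (N - 1),
      ω ∈ U (Fin.castLE (Nat.sub_le N 1) i) ∨
      ω ∈ U ⟨(i : ℕ) + 1, by have := i.isLt; omega⟩ ∨
      ∃ j, ω ∈ V i j} = T N := by
    ext ω
    simp only [Set.mem_setOf_eq, hT, Set.mem_iInter, Set.mem_union]
    constructor
    · intro h i hi
      rcases h i with h' | h' | h'
      · left; rw [hUUS (i:ℕ) (by have := i.2; omega)]; exact h'
      · right; left; rw [hUUS ((i:ℕ)+1) (by have := i.2; omega)]; exact h'
      · right; right; rw [hVVS (i:ℕ) i.2]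
        simp only [Set.mem_iUnion]
        obtain ⟨j, hj⟩ := h'
        exact ⟨j, hj⟩
    · intro h i
      have hi : (i:ℕ)+2 ≤ N := by have := i.2; omega
      rcases h i hi with h' | h' | h'
      · left; rw [hUUS (i:ℕ) (by have := i.2; omega)] at h'; exact h'
      · right; left; rw [hUUS ((i:ℕ)+1) (by have := i.2; omega)] at h'; exact h'
      · right; right
        rw [hVVS (i:ℕ) i.2] at h'
        simp only [Set.mem_iUnion] at h'
        obtain ⟨j, hj⟩ := h'
        exact ⟨j, hj⟩
  rw [htarget]
  -- measurability with respect to sub-σ-algebras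
  have hSmemM : ∀ (I : Set ι) (i : ι), i ∈ I →
      MeasurableSet[⨆ i ∈ I, generateFrom {S i}] (S i) := by
    intro I i hi
    exact (le_biSup (f := fun i => generateFrom {S i}) hi) _
      (measurableSet_generateFrom (Set.mem_singleton _))
  -- index sets
  set I1 : ℕ → Set ι := fun n => {x | Sum.elim (fun i : Fin N => (i : ℕ) < n)
      (fun p : Fin (N-1) × Fin L => (p.1 : ℕ) + 2 ≤ n) x} with hI1
  set I2 : ℕ → Set ι := fun n => {x | Sum.elim (fun i : Fin N => (i : ℕ) < n)
      (fun p : Fin (N-1) × Fin L => (p.1 : ℕ) + 1 ≤ n) x} with hI2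
  have hTmemM : ∀ (n : ℕ) (I : Set ι),
      (∀ i : Fin (N-1), (i : ℕ) + 2 ≤ n →
        (Sum.inl ⟨(i : ℕ), by omega⟩ : ι) ∈ I ∧ (Sum.inl ⟨(i : ℕ) + 1, by omega⟩ : ι) ∈ I ∧
        ∀ j, (Sum.inr (i, j) : ι) ∈ I) →
      MeasurableSet[⨆ i ∈ I, generateFrom {S i}] (T n) := by
    intro n I hcond
    apply MeasurableSet.iInter; intro i
    apply MeasurableSet.iInter; intro hi
    obtain ⟨h1, h2, h3⟩ := hcond i hi
    have e1 : UU (i : ℕ) = S (Sum.inl ⟨(i : ℕ), by omega⟩) := hUUS _ _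
    have e2 : UU ((i : ℕ) + 1) = S (Sum.inl ⟨(i : ℕ) + 1, by omega⟩) := hUUS _ _
    have e3 : VV (i : ℕ) = ⋃ j, S (Sum.inr (⟨(i : ℕ), i.2⟩, j)) := hVVS _ _
    rw [e1, e2, e3]
    have : (⟨(i : ℕ), i.2⟩ : Fin (N-1)) = i := rfl
    rw [this]
    exact (hSmemM I _ h1).union ((hSmemM I _ h2).union
      (MeasurableSet.iUnion fun j => hSmemM I _ (h3 j)))
  -- complement probabilities
  have hUc : ∀ x : Fin N, (μ ((U x)ᶜ)).toReal = 1 - u x := by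
    intro x
    rw [measure_compl (hUmeas x) (measure_ne_top μ _), measure_univ,
      ENNReal.toReal_sub_of_le prob_le_one (by simp), ENNReal.toReal_one, hU x]
  have hVc : ∀ (x : Fin (N-1)) (j : Fin L),
      (μ ((V x j)ᶜ)).toReal = 1 - u (Fin.castLE (Nat.sub_le N 1) x) := by
    intro x j
    rw [measure_compl (hVmeas x j) (measure_ne_top μ _), measure_univ,
      ENNReal.toReal_sub_of_le prob_le_one (by simp), ENNReal.toReal_one, hV x j]
  have hfin : ∀ s : Set Ω, μ s ≠ ⊤ := fun s => measure_ne_top μ s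
  have hrec : ∀ (n : ℕ), 1 ≤ n → ∀ (hnN : n < N),
      (μ (T (n+1))).toReal
        = (μ (T n)).toReal - (μ (T n ∩ (UU (n-1))ᶜ)).toReal * (1 - uu (n-1))^L * (1 - uu n) ∧
      (μ (T (n+1) ∩ (UU n)ᶜ)).toReal
        = ((μ (T n)).toReal - (μ (T n ∩ (UU (n-1))ᶜ)).toReal * (1 - uu (n-1))^L) * (1 - uu n) := by
    intro n hn1 hnN
    have hN2 : n - 1 < N - 1 := by omega
    have hpN : n - 1 < N := by omega
    -- splitting T (n+1)
    have hsplit : T (n+1) = T n ∩ (UU (n-1) ∪ (UU n ∪ VV (n-1))) := by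
      ext ω
      simp only [hT, Set.mem_iInter, Set.mem_inter_iff]
      constructor
      · intro h
        refine ⟨fun i hi => h i (by omega), ?_⟩
        have h2 := h ⟨n-1, hN2⟩ (by simp only [Fin.val_mk]; omega)
        simp only [Fin.val_mk] at h2
        rw [show n - 1 + 1 = n by omega] at h2
        exact h2
      · rintro ⟨h1, h2⟩ i hi
        rcases Nat.lt_or_ge ((i:ℕ)+2) (n+1) with hlt | hge
        · exact h1 i (by omega)
        · have e1 : (i : ℕ) + 1 = n := by omega
          have e2 : (i : ℕ) = n - 1 := by omega
          rw [e1, e2]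
          exact h2
    set F2 : Finset ι := ((Finset.univ : Finset (Fin L)).image
        (fun j => Sum.inr (⟨n-1, hN2⟩, j))) with hF2def
    set F1 : Finset ι := insert (Sum.inl ⟨n, hnN⟩) F2 with hF1def
    have hinlF2 : (Sum.inl ⟨n, hnN⟩ : ι) ∉ F2 := by simp [hF2def]
    -- product evaluations
    have hprodV : (∏ i ∈ F2, μ ((S i)ᶜ)).toReal = (1 - uu (n-1))^L := by
      rw [hF2def, Finset.prod_image (fun a _ b _ hab => congrArg Prod.snd (Sum.inr_injective hab)),
        ENNReal.toReal_prod]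
      have hval : ∀ j : Fin L, (μ ((S (Sum.inr (⟨n-1, hN2⟩, j)))ᶜ)).toReal = 1 - uu (n-1) := by
        intro j
        have h1 : (μ ((S (Sum.inr (⟨n-1, hN2⟩, j)))ᶜ)).toReal
            = (μ ((V ⟨n-1, hN2⟩ j)ᶜ)).toReal := rfl
        rw [h1, hVc ⟨n-1, hN2⟩ j, huuv (n-1) hpN]
        rfl
      rw [Finset.prod_congr rfl (fun j _ => hval j), Finset.prod_const,
        Finset.card_univ, Fintype.card_fin]
    have hprodF1 : (∏ i ∈ F1, μ ((S i)ᶜ)).toReal = (1 - uu n) * (1 - uu (n-1))^L := by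
      rw [hF1def, Finset.prod_insert hinlF2, ENNReal.toReal_mul, hprodV]
      congr 1
      have := hUc ⟨n, hnN⟩
      rw [show (μ ((S (Sum.inl ⟨n, hnN⟩))ᶜ)).toReal = (μ ((U ⟨n, hnN⟩)ᶜ)).toReal from rfl,
        this, huuv n hnN]
    -- measurability of the "past" events
    have hcond1 : ∀ i : Fin (N-1), (i : ℕ) + 2 ≤ n →
        (Sum.inl ⟨(i : ℕ), by omega⟩ : ι) ∈ I1 n ∧ (Sum.inl ⟨(i : ℕ) + 1, by omega⟩ : ι) ∈ I1 n ∧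
        ∀ j, (Sum.inr (i, j) : ι) ∈ I1 n := by
      intro i hi
      refine ⟨?_, ?_, fun j => ?_⟩ <;>
        simp only [hI1, Set.mem_ofPred_eq, Sum.elim_inl, Sum.elim_inr, Fin.val_mk] <;> exact (Set.mem_ofPred_eq ▸ (by simp only [Sum.elim_inl, Sum.elim_inr]; omega))
    have hA1 : MeasurableSet[⨆ i ∈ I1 n, MeasurableSpace.generateFrom {S i}]
        (T n ∩ (UU (n-1))ᶜ) := by
      refine (hTmemM n (I1 n) hcond1).inter ?_
      rw [hUUS (n-1) hpN]
      exact (hSmemM (I1 n) _ (by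
        simp only [hI1, Set.mem_setOf_eq, Sum.elim_inl, Fin.val_mk]; omega)).compl
    have hF1disj : ∀ i ∈ F1, i ∉ I1 n := by
      intro i hi
      rw [hF1def, Finset.mem_insert] at hi
      rcases hi with rfl | hi
      · simp only [hI1, Set.mem_setOf_eq, Sum.elim_inl, Fin.val_mk]; omega
      · rw [hF2def, Finset.mem_image] at hi
        obtain ⟨j, -, rfl⟩ := hi
        simp only [hI1, Set.mem_setOf_eq, Sum.elim_inr, Fin.val_mk]; omega
    have hF2disj : ∀ i ∈ F2, i ∉ I1 n := fun i hi =>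
      hF1disj i (by rw [hF1def]; exact Finset.mem_insert_of_mem hi)
    -- E1 : the double gap probability
    have hset1 : T n \ (UU (n-1) ∪ (UU n ∪ VV (n-1)))
        = (T n ∩ (UU (n-1))ᶜ) ∩ ⋂ i ∈ F1, (S i)ᶜ := by
      rw [hUUS n hnN, hVVS (n-1) hN2]
      ext ω
      simp only [Set.mem_diff, Set.mem_inter_iff, Set.mem_union, Set.mem_iInter,
        Set.mem_compl_iff, Set.mem_iUnion, hF1def, hF2def, Finset.mem_insert,
        Finset.mem_image, Finset.mem_univ, true_and]
      constructor
      · rintro ⟨ht, hn'⟩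
        push_neg at hn'
        refine ⟨⟨ht, hn'.1⟩, ?_⟩
        rintro x (rfl | ⟨j, rfl⟩)
        · exact hn'.2.1
        · exact hn'.2.2 j
      · rintro ⟨⟨ht, hp⟩, hrest⟩
        refine ⟨ht, ?_⟩
        push_neg
        exact ⟨hp, hrest _ (Or.inl rfl), fun j => hrest _ (Or.inr ⟨j, rfl⟩)⟩
    have hE1 : (μ (T n \ (UU (n-1) ∪ (UU n ∪ VV (n-1))))).toReal
        = (μ (T n ∩ (UU (n-1))ᶜ)).toReal * ((1 - uu n) * (1 - uu (n-1))^L) := by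
      rw [hset1, indep_key μ S hSmeas hindep (I1 n) _ hA1 F1 hF1disj, ENNReal.toReal_mul,
        hprodF1]
    -- E3 : conditional on no U-occurrence, the V's are independent
    have hset3 : T n \ (UU (n-1) ∪ VV (n-1))
        = (T n ∩ (UU (n-1))ᶜ) ∩ ⋂ i ∈ F2, (S i)ᶜ := by
      rw [hVVS (n-1) hN2]
      ext ω
      simp only [Set.mem_diff, Set.mem_inter_iff, Set.mem_union, Set.mem_iInter,
        Set.mem_compl_iff, Set.mem_iUnion, hF2def, Finset.mem_image, Finset.mem_univ, true_and]
      constructor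
      · rintro ⟨ht, hn'⟩
        push_neg at hn'
        refine ⟨⟨ht, hn'.1⟩, ?_⟩
        rintro x ⟨j, rfl⟩
        exact hn'.2 j
      · rintro ⟨⟨ht, hp⟩, hrest⟩
        refine ⟨ht, ?_⟩
        push_neg
        exact ⟨hp, fun j => hrest _ ⟨j, rfl⟩⟩
    have hE3 : (μ (T n \ (UU (n-1) ∪ VV (n-1)))).toReal
        = (μ (T n ∩ (UU (n-1))ᶜ)).toReal * (1 - uu (n-1))^L := by
      rw [hset3, indep_key μ S hSmeas hindep (I1 n) _ hA1 F2 hF2disj, ENNReal.toReal_mul,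
        hprodV]
    -- E2 : peel off U n
    have hcond2 : ∀ i : Fin (N-1), (i : ℕ) + 2 ≤ n →
        (Sum.inl ⟨(i : ℕ), by omega⟩ : ι) ∈ I2 n ∧ (Sum.inl ⟨(i : ℕ) + 1, by omega⟩ : ι) ∈ I2 n ∧
        ∀ j, (Sum.inr (i, j) : ι) ∈ I2 n := by
      intro i hi
      refine ⟨?_, ?_, fun j => ?_⟩ <;>
        simp only [hI2, Set.mem_ofPred_eq, Sum.elim_inl, Sum.elim_inr, Fin.val_mk] <;> exact (Set.mem_ofPred_eq ▸ (by simp only [Sum.elim_inl, Sum.elim_inr]; omega))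
    have hA2 : MeasurableSet[⨆ i ∈ I2 n, MeasurableSpace.generateFrom {S i}]
        (T n ∩ (UU (n-1) ∪ VV (n-1))) := by
      refine (hTmemM n (I2 n) hcond2).inter ?_
      rw [hUUS (n-1) hpN, hVVS (n-1) hN2]
      refine MeasurableSet.union ?_ (MeasurableSet.iUnion fun j => ?_)
      · exact hSmemM (I2 n) _ (by
          simp only [hI2, Set.mem_setOf_eq, Sum.elim_inl, Fin.val_mk]; omega)
      · exact hSmemM (I2 n) _ (by
          simp only [hI2, Set.mem_setOf_eq, Sum.elim_inr, Fin.val_mk]; omega)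
    have hsplit2 : T (n+1) ∩ (UU n)ᶜ
        = (T n ∩ (UU (n-1) ∪ VV (n-1))) ∩ ⋂ i ∈ ({Sum.inl ⟨n, hnN⟩} : Finset ι), (S i)ᶜ := by
      rw [hsplit, hUUS n hnN]
      ext ω
      simp only [Set.mem_inter_iff, Set.mem_union, Set.mem_compl_iff, Set.mem_iInter,
        Finset.mem_singleton, forall_eq]
      constructor
      · rintro ⟨⟨ht, h⟩, hnotU⟩
        refine ⟨⟨ht, ?_⟩, hnotU⟩
        rcases h with h | h | h
        exacts [Or.inl h, absurd h hnotU, Or.inr h]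
      · rintro ⟨⟨ht, h⟩, hnotU⟩
        refine ⟨⟨ht, ?_⟩, hnotU⟩
        rcases h with h | h
        exacts [Or.inl h, Or.inr (Or.inr h)]
    have hE2 : (μ (T (n+1) ∩ (UU n)ᶜ)).toReal
        = (μ (T n ∩ (UU (n-1) ∪ VV (n-1)))).toReal * (1 - uu n) := by
      rw [hsplit2, indep_key μ S hSmeas hindep (I2 n) _ hA2 {Sum.inl ⟨n, hnN⟩}
        (by intro i hi
            rw [Finset.mem_singleton] at hi
            subst hi
            simp only [hI2, Set.mem_setOf_eq, Sum.elim_inl, Fin.val_mk]; omega),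
        ENNReal.toReal_mul, Finset.prod_singleton]
      congr 1
      rw [show (μ ((S (Sum.inl ⟨n, hnN⟩))ᶜ)).toReal = (μ ((U ⟨n, hnN⟩)ᶜ)).toReal from rfl,
        hUc ⟨n, hnN⟩, huuv n hnN]
    -- assembling
    have hG1meas : MeasurableSet (UU (n-1) ∪ (UU n ∪ VV (n-1))) :=
      (hUUm _).union ((hUUm _).union (hVVm _))
    have hG2meas : MeasurableSet (UU (n-1) ∪ VV (n-1)) := (hUUm _).union (hVVm _)
    have hadd1 := measure_inter_add_diff (μ := μ) (T n) hG1meas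
    have hadd2 := measure_inter_add_diff (μ := μ) (T n) hG2meas
    have hadd1' := congrArg ENNReal.toReal hadd1
    have hadd2' := congrArg ENNReal.toReal hadd2
    rw [ENNReal.toReal_add (hfin _) (hfin _)] at hadd1' hadd2'
    have hTG2 : (μ (T n ∩ (UU (n-1) ∪ VV (n-1)))).toReal
        = (μ (T n)).toReal - (μ (T n ∩ (UU (n-1))ᶜ)).toReal * (1 - uu (n-1))^L := by
      rw [← hE3]; linarith
    constructor
    · rw [hsplit]
      have : (μ (T n ∩ (UU (n-1) ∪ (UU n ∪ VV (n-1))))).toReal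
          = (μ (T n)).toReal - (μ (T n \ (UU (n-1) ∪ (UU n ∪ VV (n-1))))).toReal := by
        linarith
      rw [this, hE1]; ring
    · rw [hE2, hTG2]
  -- the main induction
  have hmain : ∀ n, 1 ≤ n → n ≤ N →
      ∏ i ∈ Finset.range n, beta (L+1) (uu i)
        ≤ (μ (T n)).toReal
          - (1 - beta (L+1) (uu (n-1))) / (1 - uu (n-1)) * (μ (T n ∩ (UU (n-1))ᶜ)).toReal := by
    intro n hn1
    induction n, hn1 using Nat.le_induction with
    | base =>
      intro _
      have hT1 : T 1 = Set.univ := by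
        ext ω
        simp only [hT, Set.mem_iInter, Set.mem_univ, iff_true]
        intro i hi
        omega
      have h0N : (0:ℕ) < N := hN1
      obtain ⟨h00, h01⟩ := huIoo 0 h0N
      have hb1 : (μ (T 1 ∩ (UU 0)ᶜ)).toReal = 1 - uu 0 := by
        rw [hT1, Set.univ_inter, hUUS 0 h0N]
        rw [show (μ ((S (Sum.inl ⟨0, h0N⟩))ᶜ)).toReal = (μ ((U ⟨0, h0N⟩)ᶜ)).toReal from rfl,
          hUc _, huuv 0 h0N]
      have ha1 : (μ (T 1)).toReal = 1 := by rw [hT1, measure_univ, ENNReal.toReal_one]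
      rw [Finset.prod_range_one, show (1:ℕ) - 1 = 0 from rfl, ha1, hb1,
        div_mul_cancel₀ _ (ne_of_gt (show (0:ℝ) < 1 - uu 0 by linarith))]
      linarith
    | succ n hn ih =>
      intro hsN
      have hnN : n < N := by omega
      have ihh := ih (by omega)
      obtain ⟨hr1, hr2⟩ := hrec n hn hnN
      obtain ⟨hp0, hp1⟩ := huIoo (n-1) (by omega)
      obtain ⟨hc0, hc1⟩ := huIoo n hnN
      have hmon : uu (n-1) ≤ uu n := by
        rw [huuv (n-1) (by omega), huuv n hnN]
        exact hmono (by simp only [Fin.mk_le_mk]; omega)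
      set β := beta (L+1) (uu (n-1)) with hβ
      set β' := beta (L+1) (uu n) with hβ'
      obtain ⟨hβu, hβ1⟩ := beta_bounds hp0 hp1
      obtain ⟨hβ'u, hβ'1⟩ := beta_bounds hc0 hc1
      have hstep := beta_step (L := L) hp0 hc1 hmon
      have hppos : 0 < 1 - uu (n-1) := by linarith
      have hp'pos : 0 < 1 - uu n := by linarith
      set an := (μ (T n)).toReal with han
      set bn := (μ (T n ∩ (UU (n-1))ᶜ)).toReal with hbn
      have hbn0 : 0 ≤ bn := ENNReal.toReal_nonneg
      rw [show n + 1 - 1 = n from rfl, hr1, hr2]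
      have hRHS : an - bn * (1 - uu (n-1))^L * (1 - uu n)
            - (1 - β') / (1 - uu n) * ((an - bn * (1 - uu (n-1))^L) * (1 - uu n))
          = an * β' - bn * (1 - uu (n-1))^L * (β' - uu n) := by
        field_simp
        ring
      rw [hRHS]
      have hkey : (1 - uu (n-1))^L * (β' - uu n) ≤ β' * ((1 - β) / (1 - uu (n-1))) := by
        rw [show β' * ((1 - β) / (1 - uu (n-1))) = β' * (1 - β) / (1 - uu (n-1)) from
          (mul_div_assoc _ _ _).symm, le_div_iff₀ hppos]
        calc (1 - uu (n-1))^L * (β' - uu n) * (1 - uu (n-1))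
            = (1 - uu (n-1))^(L+1) * (β' - uu n) := by ring
          _ ≤ β' * (1 - β) := hstep
      calc ∏ i ∈ Finset.range (n+1), beta (L+1) (uu i)
          = (∏ i ∈ Finset.range n, beta (L+1) (uu i)) * β' := Finset.prod_range_succ _ _
        _ ≤ (an - (1 - β) / (1 - uu (n-1)) * bn) * β' :=
            mul_le_mul_of_nonneg_right ihh (by linarith)
        _ ≤ an * β' - bn * (1 - uu (n-1))^L * (β' - uu n) := by
            nlinarith [mul_le_mul_of_nonneg_left hkey hbn0]
  -- conclusion
  have hfinal := hmain N hN1 le_rfl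
  have hprodeq : ∏ i : Fin N, beta (L + 1) (u i) = ∏ i ∈ Finset.range N, beta (L+1) (uu i) := by
    rw [← Fin.prod_univ_eq_prod_range (fun i => beta (L+1) (uu i)) N]
    apply Finset.prod_congr rfl
    intro i _
    rw [huuv (i : ℕ) i.2]
  rw [hprodeq]
  have hcN : 0 ≤ (1 - beta (L+1) (uu (N-1))) / (1 - uu (N-1)) := by
    obtain ⟨h0, h1⟩ := huIoo (N-1) (by omega)
    obtain ⟨hbu, hb1⟩ := beta_bounds h0 h1
    apply div_nonneg <;> linarith
  have hnn := mul_nonneg hcN (ENNReal.toReal_nonneg (a := μ (T N ∩ (UU (N-1))ᶜ)))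
  linarith



end Boot
end

section
/- For every k ∈ ℕ and all real numbers u, v with 0 ≤ u ≤ v ≤ 1, one has (1 − (1−u)^k) β_k(v) + (1−u)^k v ≥ β_k(u) β_k(v). -/
open Filter

namespace Boot

set_option maxHeartbeats 1000000 in
/-- **Lemma (Statement 3).** For every `k ∈ ℕ` and `0 ≤ u ≤ v ≤ 1`,
`(1 − (1−u)^k) β_k(v) + (1−u)^k v ≥ β_k(u) β_k(v)`. -/
theorem beta_ineq (k : ℕ) (u v : ℝ) (hu : 0 ≤ u) (huv : u ≤ v) (hv : v ≤ 1) :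
    beta k u * beta k v ≤ (1 - (1 - u) ^ k) * beta k v + (1 - u) ^ k * v := by
  have hu1 : u ≤ 1 := le_trans huv hv
  have hv0 : 0 ≤ v := le_trans hu huv
  set a := (1 - u) ^ k with ha
  set b := (1 - v) ^ k with hb
  have ha0 : 0 ≤ a := pow_nonneg (by linarith) k
  have hb0 : 0 ≤ b := pow_nonneg (by linarith) k
  have ha1 : a ≤ 1 := pow_le_one₀ (by linarith) (by linarith)
  have hb1 : b ≤ 1 := pow_le_one₀ (by linarith) (by linarith)
  have hba : b ≤ a := pow_le_pow_left₀ (by linarith) (by linarith) k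
  have hTu : (1 : ℝ) + (4*u-2)*a + (1-u)^(2*k) = (1-a)^2 + 4*u*a := by
    rw [ha, two_mul, pow_add]; ring
  have hTv : (1 : ℝ) + (4*v-2)*b + (1-v)^(2*k) = (1-b)^2 + 4*v*b := by
    rw [hb, two_mul, pow_add]; ring
  set s := Real.sqrt ((1-a)^2 + 4*u*a) with hs
  set t := Real.sqrt ((1-b)^2 + 4*v*b) with ht
  have hsnn : 0 ≤ s := Real.sqrt_nonneg _
  have htnn : 0 ≤ t := Real.sqrt_nonneg _
  have hs2 : s^2 = (1-a)^2 + 4*u*a := Real.sq_sqrt (by nlinarith)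
  have ht2 : t^2 = (1-b)^2 + 4*v*b := Real.sq_sqrt (by nlinarith)
  have hbu : beta k u = (1 - a + s)/2 := by
    simp only [beta]; rw [← ha, hTu]
  have hbv : beta k v = (1 - b + t)/2 := by
    simp only [beta]; rw [← hb, hTv]
  have hBu2 : beta k u ^ 2 = (1-a) * beta k u + u*a := by
    rw [hbu]; linear_combination hs2 / 4
  have hβu0 : 0 ≤ beta k u := by rw [hbu]; linarith
  have hβv0 : 0 ≤ beta k v := by rw [hbv]; linarith
  have hβu_ge : 1 - a ≤ beta k u := by
    rw [hbu]
    nlinarith [hs2, hsnn, mul_nonneg hu ha0]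
  -- key monotonicity: u * (1 - b) ≤ v * (1 - a)
  have hgu : 1 - a = u * ∑ i ∈ Finset.range k, (1-u)^i := by
    linear_combination geom_sum_mul (1-u) k - ha
  have hgv : 1 - b = v * ∑ i ∈ Finset.range k, (1-v)^i := by
    linear_combination geom_sum_mul (1-v) k - hb
  have hsum : ∑ i ∈ Finset.range k, (1-v)^i ≤ ∑ i ∈ Finset.range k, (1-u)^i :=
    Finset.sum_le_sum fun i _ => pow_le_pow_left₀ (by linarith) (by linarith) i
  have hkey : u*(1-b) ≤ v*(1-a) := by
    rw [hgu, hgv]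
    nlinarith [mul_le_mul_of_nonneg_left hsum (mul_nonneg hu hv0)]
  -- bound on u*t
  have hD0 : 0 ≤ 2*v*beta k u - u*(1-b) := by
    nlinarith [mul_le_mul_of_nonneg_left hβu_ge hv0, hkey, mul_nonneg hu (by linarith : (0:ℝ) ≤ 1-b)]
  have hut : u * t ≤ 2*v*beta k u - u*(1-b) := by
    have h1 : u * t = Real.sqrt (u^2 * ((1-b)^2 + 4*v*b)) := by
      rw [Real.sqrt_mul (sq_nonneg u), Real.sqrt_sq hu, ht]
    have p1 : 0 ≤ v * beta k u * (v*(1-a) - u*(1-b)) :=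
      mul_nonneg (mul_nonneg hv0 hβu0) (by linarith)
    have p2 : 0 ≤ u * v * (v*a - u*b) := by
      have : u*b ≤ v*a := by nlinarith
      exact mul_nonneg (mul_nonneg hu hv0) (by linarith)
    have h2 : u^2 * ((1-b)^2 + 4*v*b) ≤ (2*v*beta k u - u*(1-b))^2 := by
      have hid : (2*v*beta k u - u*(1-b))^2 - u^2 * ((1-b)^2 + 4*v*b)
          = 4*(v * beta k u * (v*(1-a) - u*(1-b))) + 4*(u*v*(v*a - u*b)) := by
        linear_combination 4*v^2 * hBu2
      linarith [hid, p1, p2]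
    calc u * t = Real.sqrt (u^2 * ((1-b)^2 + 4*v*b)) := h1
      _ ≤ Real.sqrt ((2*v*beta k u - u*(1-b))^2) := Real.sqrt_le_sqrt h2
      _ = 2*v*beta k u - u*(1-b) := Real.sqrt_sq hD0
  have hm : u * beta k v ≤ v * beta k u := by
    rw [hbv]; nlinarith [hut]
  -- conclude
  rcases eq_or_lt_of_le hβu0 with h0 | hpos
  · rw [← h0]
    nlinarith [mul_nonneg (by linarith : (0:ℝ) ≤ 1-a) hβv0, mul_nonneg ha0 hv0]
  · have key : beta k u * ((1-a)*beta k v + a*v - beta k u * beta k v)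
        = a*(v*beta k u - u*beta k v) := by
      linear_combination (-(beta k v)) * hBu2
    nlinarith [key, mul_nonneg ha0 (sub_nonneg.2 hm), hpos]

end Boot
end

section
/- For every k ∈ ℕ, the function u ↦ β_k(u)/u is monotonically decreasing on the interval (0,1). -/
open Filter

namespace Boot

lemma beta_eq (k : ℕ) (u : ℝ) :
    beta k u = ((1 - (1-u)^k) + Real.sqrt ((1 - (1-u)^k)^2 + 4*(u*(1-u)^k))) / 2 := by
  unfold beta
  congr 3
  rw [pow_mul']
  ring

lemma le_root {a c x : ℝ} (hc : 0 ≤ c)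
    (h : x^2 - a*x - c ≤ 0) : x ≤ (a + Real.sqrt (a^2 + 4*c))/2 := by
  have hd : (0:ℝ) ≤ a^2 + 4*c := by positivity
  have h1 : Real.sqrt (a^2+4*c) ^ 2 = a^2 + 4*c := Real.sq_sqrt hd
  have h2 : 0 ≤ Real.sqrt (a^2+4*c) := Real.sqrt_nonneg _
  nlinarith [sq_nonneg (2*x - a - Real.sqrt (a^2+4*c)), sq_nonneg (2*x - a + Real.sqrt (a^2+4*c))]

lemma s_mem {k : ℕ} {u : ℝ} (hu : u ∈ Set.Ioo (0:ℝ) 1) :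
    0 < (1-u)^k ∧ (1-u)^k ≤ 1 := by
  obtain ⟨h0, h1⟩ := hu
  constructor
  · exact pow_pos (by linarith) k
  · exact pow_le_one₀ (by linarith) (by linarith)

lemma self_le_beta {k : ℕ} {u : ℝ} (hu : u ∈ Set.Ioo (0:ℝ) 1) : u ≤ beta k u := by
  obtain ⟨hs0, hs1⟩ := s_mem (k := k) hu
  obtain ⟨h0, h1⟩ := hu
  rw [beta_eq]
  apply le_root (mul_nonneg h0.le hs0.le)
  nlinarith

lemma beta_pos {k : ℕ} {u : ℝ} (hu : u ∈ Set.Ioo (0:ℝ) 1) : 0 < beta k u :=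
  lt_of_lt_of_le hu.1 (self_le_beta hu)

lemma beta_sq {k : ℕ} {u : ℝ} (hu : u ∈ Set.Ioo (0:ℝ) 1) :
    (beta k u)^2 = (1 - (1-u)^k) * beta k u + u * (1-u)^k := by
  obtain ⟨hs0, hs1⟩ := s_mem (k := k) hu
  obtain ⟨h0, h1⟩ := hu
  have hd : (0:ℝ) ≤ (1 - (1-u)^k)^2 + 4*(u*(1-u)^k) := by positivity
  have h1' : Real.sqrt ((1 - (1-u)^k)^2 + 4*(u*(1-u)^k)) ^ 2
      = (1 - (1-u)^k)^2 + 4*(u*(1-u)^k) := Real.sq_sqrt hd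
  rw [beta_eq]
  nlinarith [h1']

lemma beta_mono {k : ℕ} {u₁ u₂ : ℝ} (h1 : u₁ ∈ Set.Ioo (0:ℝ) 1) (h2 : u₂ ∈ Set.Ioo (0:ℝ) 1)
    (h12 : u₁ ≤ u₂) : beta k u₁ ≤ beta k u₂ := by
  obtain ⟨hs01, hs11⟩ := s_mem (k := k) h1
  obtain ⟨hs02, hs12⟩ := s_mem (k := k) h2
  have hss : (1-u₂)^k ≤ (1-u₁)^k :=
    pow_le_pow_left₀ (by linarith [h2.2]) (by linarith) k
  have hb1 := beta_sq (k := k) h1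
  have hbu := self_le_beta (k := k) h1
  rw [beta_eq k u₂]
  apply le_root (mul_nonneg h2.1.le hs02.le)
  nlinarith [h2.1, h1.1, beta_pos (k := k) h1]

/-- **Lemma (Statement 4).** For every `k ∈ ℕ`, the map `u ↦ β_k(u)/u` is monotonically
decreasing on the interval `(0,1)`. -/
theorem beta_div_self_antitoneOn (k : ℕ) :
    AntitoneOn (fun u : ℝ => beta k u / u) (Set.Ioo (0 : ℝ) 1) := by
  intro u₁ h1 u₂ h2 h12
  simp only
  have hb1 := beta_pos (k := k) h1
  have hb2 := beta_pos (k := k) h2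
  have key : ∀ u ∈ Set.Ioo (0:ℝ) 1,
      beta k u / u = (∑ i ∈ Finset.range k, (1-u)^i) + (1-u)^k / beta k u := by
    intro u hu
    have hb := beta_pos (k := k) hu
    have hsq := beta_sq (k := k) hu
    have hu0 : u ≠ 0 := hu.1.ne'
    have hgeom : (∑ i ∈ Finset.range k, (1-u)^i) = (1 - (1-u)^k) / u := by
      rw [geom_sum_eq (by intro h; have := hu.1; nlinarith [hu.1] : (1:ℝ)-u ≠ 1),
        div_eq_div_iff (by linarith [hu.1] : (1:ℝ)-u-1 ≠ 0) hu0]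
      ring
    rw [hgeom]
    rw [div_add_div _ _ hu0 hb.ne', div_eq_div_iff hu0 (mul_ne_zero hu0 hb.ne')]
    linear_combination u * hsq
  rw [key u₁ h1, key u₂ h2]
  have hsum : (∑ i ∈ Finset.range k, (1-u₂)^i) ≤ ∑ i ∈ Finset.range k, (1-u₁)^i := by
    apply Finset.sum_le_sum
    intro i _
    exact pow_le_pow_left₀ (by linarith [h2.2]) (by linarith) i
  have hdiv : (1-u₂)^k / beta k u₂ ≤ (1-u₁)^k / beta k u₁ := by
    apply div_le_div₀ (s_mem h1).1.le
      (pow_le_pow_left₀ (by linarith [h2.2]) (by linarith) k) hb1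
      (beta_mono h1 h2 h12)
  linarith


end Boot
end

section
/- Fix integers d ≥ 2, ℓ ≥ 0, n ≥ 1, an integer a ≥ 1, and b⃗ = (b^{(1)},...,b^{(d−1)}) ∈ [n]^{d−1} with b := max_t b^{(t)} satisfying a + 3 ≤ b ≤ n. For every set A ⊆ [n]^d × [2]^ℓ of initially infected sites: if [a]^d × [2]^ℓ is internally semi-spanned in C*([n]^d × [2]^ℓ, 2) and A satisfies the event T_a^{b⃗}, then [b]^d × [2]^ℓ is internally semi-spanned in C*([n]^d × [2]^ℓ, 2). -/
open Filter

namespace Boot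

/-- `λ(d,r) = ∫_0^∞ g_{r-1}(z^{d-r+1}) dz`. -/
noncomputable def lam (d r : ℕ) : ℝ := ∫ z in Set.Ioi (0 : ℝ), gfun (r - 1) (z ^ (d - r + 1))

/-- Iterated logarithm: `iterLog 0 x = x`, `iterLog (k+1) x = log (iterLog k x)`. -/
noncomputable def iterLog : ℕ → ℝ → ℝ
  | 0, x => x
  | (k + 1), x => Real.log (iterLog k x)

/-- Adjacency in `ℤ^k`: `ℓ¹`-distance `1`. -/
def adj {k : ℕ} (v w : Fin k → ℤ) : Prop := (∑ i, |v i - w i|) = 1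

/-- One-step iterates of the bootstrap process with carrier `S` and threshold function `thr`,
starting at `A`; only sites of `S` may become infected. -/
def iterInf {k : ℕ} (S : Set (Fin k → ℤ)) (thr : (Fin k → ℤ) → ℕ) (A : Set (Fin k → ℤ)) :
    ℕ → Set (Fin k → ℤ)
  | 0 => A
  | (t + 1) => iterInf S thr A t ∪
      {v | v ∈ S ∧ thr v ≤ {w | adj v w ∧ w ∈ iterInf S thr A t}.ncard}

/-- Bootstrap closure `[A]`. -/
def bclosure {k : ℕ} (S : Set (Fin k → ℤ)) (thr : (Fin k → ℤ) → ℕ)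
    (A : Set (Fin k → ℤ)) : Set (Fin k → ℤ) :=
  ⋃ t, iterInf S thr A t

open Classical in
/-- The probability, when each site of the finite set `S` is included in the random set `A`
independently with probability `p`, that the configuration `A` satisfies `E`. -/
noncomputable def cfgProb {α : Type*} [DecidableEq α] (S : Finset α) (p : ℝ)
    (E : Finset α → Prop) : ℝ :=
  ∑ A ∈ S.powerset, if E A then p ^ A.card * (1 - p) ^ (S.card - A.card) else 0

/-! ### ordinary `r`-neighbour percolation on `[n]^d` -/

def gridBox (n d : ℕ) : Set (Fin d → ℤ) := {v | ∀ i, 1 ≤ v i ∧ v i ≤ (n : ℤ)}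

noncomputable def gridFinset (n d : ℕ) : Finset (Fin d → ℤ) := Fintype.piFinset fun _ => Finset.Icc 1 (n : ℤ)

def percolates (n d r : ℕ) (A : Set (Fin d → ℤ)) : Prop :=
  gridBox n d ⊆ bclosure (gridBox n d) (fun _ => r) A

noncomputable def Pperc (n d r : ℕ) (p : ℝ) : ℝ :=
  cfgProb (gridFinset n d) p fun A => percolates n d r ↑A

/-- The critical probability `p_c([n]^d, r) = inf {p : P([n]^d,r,p) ≥ 1/2}`. -/
noncomputable def pcrit (n d r : ℕ) : ℝ :=
  sInf {p : ℝ | p ∈ Set.Icc (0 : ℝ) 1 ∧ 1 / 2 ≤ Pperc n d r p}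

/-! ### the structure `C*([n]^d × [2]^ℓ, r)` -/

def low (d ℓ : ℕ) (i : Fin d) : Fin (d + ℓ) := Fin.castAdd ℓ i
def high (d ℓ : ℕ) (j : Fin ℓ) : Fin (d + ℓ) := Fin.natAdd d j

/-- The box `[n]^d × [2]^ℓ`. -/
def cstarBox (n d ℓ : ℕ) : Set (Fin (d + ℓ) → ℤ) :=
  {v | (∀ i : Fin d, 1 ≤ v (low d ℓ i) ∧ v (low d ℓ i) ≤ (n : ℤ)) ∧
    ∀ j : Fin ℓ, 1 ≤ v (high d ℓ j) ∧ v (high d ℓ j) ≤ 2}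

/-- The bottom layer `[n]^d × (1,…,1)`. -/
def bottom (n d ℓ : ℕ) : Set (Fin (d + ℓ) → ℤ) :=
  {v | (∀ i : Fin d, 1 ≤ v (low d ℓ i) ∧ v (low d ℓ i) ≤ (n : ℤ)) ∧
    ∀ j : Fin ℓ, v (high d ℓ j) = 1}

/-- Thresholds of `C*([n]^d × [2]^ℓ, r)`: `r` on the bottom layer, `r + ℓ` elsewhere. -/
def cstarThr (d ℓ r : ℕ) (v : Fin (d + ℓ) → ℤ) : ℕ :=
  if ∀ j : Fin ℓ, v (high d ℓ j) = 1 then r else r + ℓ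

/-- `A` semi-percolates in `C*([n]^d × [2]^ℓ, r)`. -/
def semiPerc (n d ℓ r : ℕ) (A : Set (Fin (d + ℓ) → ℤ)) : Prop :=
  bottom n d ℓ ⊆ bclosure (cstarBox n d ℓ) (cstarThr d ℓ r) A

/-- `S` is internally semi-spanned (for initially infected set `A`) in
`C*([n]^d × [2]^ℓ, r)`. -/
def issp (n d ℓ r : ℕ) (S A : Set (Fin (d + ℓ) → ℤ)) : Prop :=
  S ∩ bottom n d ℓ ⊆ bclosure (cstarBox n d ℓ) (cstarThr d ℓ r) (S ∩ A)

/-- The box `[n]^d × [2]^ℓ` as a finite set of sites. -/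
noncomputable def cstarFinset (n d ℓ : ℕ) : Finset (Fin (d + ℓ) → ℤ) :=
  Fintype.piFinset fun i => if (i : ℕ) < d then Finset.Icc 1 (n : ℤ) else Finset.Icc 1 2

/-- `P(n,d,ℓ,r,p)`: the probability that `A ~ Bin([n+1]^d × [2]^ℓ, p)` semi-percolates in
`C*([n]^d × [2]^ℓ, r)`. -/
noncomputable def Pfun (n d ℓ r : ℕ) (p : ℝ) : ℝ :=
  cfgProb (cstarFinset (n + 1) d ℓ) p fun A => semiPerc n d ℓ r ↑A

/-- A set of sites is occupied by `A` if it meets `A`. -/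
def occ {k : ℕ} (A S : Set (Fin k → ℤ)) : Prop := (A ∩ S).Nonempty

def onesVec (ℓ : ℕ) : Fin ℓ → ℤ := fun _ => 1
def onesPlus (ℓ : ℕ) (j : Fin ℓ) : Fin ℓ → ℤ := fun j' => if j' = j then 2 else 1

/-- The set `[s]^{t-1} × {i} × [s]^{d-t} × {e}` (coordinate `t` equal to `i`, the other
grid coordinates in `[s]`, and the last `ℓ` coordinates given by `e`). -/
def slab (d ℓ : ℕ) (t : Fin d) (i s : ℤ) (e : Fin ℓ → ℤ) : Set (Fin (d + ℓ) → ℤ) :=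
  {v | v (low d ℓ t) = i ∧
    (∀ t' : Fin d, t' ≠ t → 1 ≤ v (low d ℓ t') ∧ v (low d ℓ t') ≤ s) ∧
    ∀ j : Fin ℓ, v (high d ℓ j) = e j}

/-- The event `D_a^b`: for each direction `t`, no `L`-gap occurs in the sequence of occupancy
events of `[i-1]^{t-1} × {i} × [i-1]^{d-t} × (1,…,1)` for `a+1 ≤ i ≤ b` and of
`[i-1]^{t-1} × {i} × [i-1]^{d-t} × ((1,…,1)+e_j)` for `a+1 ≤ i ≤ b-1`, `j ∈ [ℓ]`. -/
def Dab (d ℓ : ℕ) (a b : ℤ) (A : Set (Fin (d + ℓ) → ℤ)) : Prop :=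
  ∀ t : Fin d, ∀ i : ℤ, a + 1 ≤ i → i ≤ b - 1 →
    occ A (slab d ℓ t i (i - 1) (onesVec ℓ)) ∨ occ A (slab d ℓ t (i + 1) i (onesVec ℓ)) ∨
      ∃ j : Fin ℓ, occ A (slab d ℓ t i (i - 1) (onesPlus ℓ j))

/-! For the event `T_a^{b⃗}` we write the dimension as `d = e + 1`; the first `e` grid
coordinates are the directions `t ≠ d` and `Fin.last e` is direction `d`. -/

def fdim (e ℓ : ℕ) (t : Fin e) : Fin (e + 1 + ℓ) := low (e + 1) ℓ t.castSucc
def lastDim (e ℓ : ℕ) : Fin (e + 1 + ℓ) := low (e + 1) ℓ (Fin.last e)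

/-- The cuboid `[bv 1] × ⋯ × [bv e] × {i} × {ev}`. -/
def tslab (e ℓ : ℕ) (bv : Fin e → ℤ) (i : ℤ) (ev : Fin ℓ → ℤ) : Set (Fin (e + 1 + ℓ) → ℤ) :=
  {v | (∀ t : Fin e, 1 ≤ v (fdim e ℓ t) ∧ v (fdim e ℓ t) ≤ bv t) ∧
    v (lastDim e ℓ) = i ∧ ∀ j : Fin ℓ, v (high (e + 1) ℓ j) = ev j}

/-- The site of `[n]^{e+1} × [2]^ℓ` whose first `e+1` coordinates are `w` and whose
last `ℓ` coordinates all equal `1`. -/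
def mkSite (e ℓ : ℕ) (w : Fin (e + 1) → ℤ) : Fin (e + 1 + ℓ) → ℤ :=
  Fin.append w (fun _ : Fin ℓ => 1)

/-- The event `T_a^{b⃗}` (with `b = max_t b⃗ t` passed explicitly). -/
def Tab (e ℓ : ℕ) (a : ℤ) (bvec : Fin e → ℤ) (b : ℤ) (A : Set (Fin (e + 1 + ℓ) → ℤ)) : Prop :=
  -- (i)
  (¬ occ A (tslab e ℓ (fun t => bvec t - 1) (a + 1) (onesVec ℓ)) ∧
    ¬ occ A (tslab e ℓ (fun t => bvec t - 1) (a + 2) (onesVec ℓ))) ∧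
  -- (ii)
  (∀ j : Fin ℓ, ¬ occ A (tslab e ℓ (fun t => bvec t - 1) (a + 1) (onesPlus ℓ j))) ∧
  -- (iii)
  (∀ t : Fin e, ∀ i : ℤ, a + 1 ≤ i → i ≤ b - 1 →
    occ A (slab (e + 1) ℓ t.castSucc i a (onesVec ℓ)) ∨
    occ A (slab (e + 1) ℓ t.castSucc (i + 1) a (onesVec ℓ)) ∨
    ∃ j : Fin ℓ, occ A (slab (e + 1) ℓ t.castSucc i a (onesPlus ℓ j))) ∧
  -- (iv)
  (∀ t : Fin e, occ A (slab (e + 1) ℓ t.castSucc b a (onesVec ℓ))) ∧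
  -- (v)
  (mkSite e ℓ (Fin.snoc bvec (a + 2)) ∈ A) ∧
  -- (vi)
  (∀ i : ℤ, a + 3 ≤ i → i ≤ b - 1 →
    occ A (slab (e + 1) ℓ (Fin.last e) i b (onesVec ℓ)) ∨
    occ A (slab (e + 1) ℓ (Fin.last e) (i + 1) b (onesVec ℓ)) ∨
    ∃ j : Fin ℓ, occ A (slab (e + 1) ℓ (Fin.last e) i b (onesPlus ℓ j))) ∧
  -- (vii)
  occ A (slab (e + 1) ℓ (Fin.last e) b b (onesVec ℓ))

/-- The site `x^{(t)}`: coordinate `t` equal to `2`, all others equal to `1`. -/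
def xsite (e ℓ : ℕ) (t : Fin (e + 1)) : Fin (e + 1 + ℓ) → ℤ :=
  mkSite e ℓ (fun t' => if t' = t then 2 else 1)

/-- The site `y^{(t)}`: coordinates `t` and `d+1,…,d+ℓ` equal to `1`, all others equal `B`. -/
def ysite (e ℓ : ℕ) (B : ℤ) (t : Fin (e + 1)) : Fin (e + 1 + ℓ) → ℤ :=
  mkSite e ℓ (fun t' => if t' = t then 1 else B)

/-- The event `𝒢(a_1, b⃗_1, …, a_m, b⃗_m)` (with `b i = max_t bvec i t` passed explicitly). -/
def Gevent (e ℓ : ℕ) (B : ℤ) (m : ℕ) (hm : 0 < m) (a : Fin m → ℤ)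
    (bvec : Fin m → Fin e → ℤ) (b : Fin m → ℤ) (A : Set (Fin (e + 1 + ℓ) → ℤ)) : Prop :=
  mkSite e ℓ (fun _ => 1) ∈ A ∧
  Dab (e + 1) ℓ 2 (a ⟨0, hm⟩) A ∧
  (∀ i : Fin m, Tab e ℓ (a i) (bvec i) (b i) A) ∧
  (∀ i : Fin m, ∀ h : (i : ℕ) + 1 < m, Dab (e + 1) ℓ (b i) (a ⟨(i : ℕ) + 1, h⟩) A) ∧
  Dab (e + 1) ℓ (b ⟨m - 1, by omega⟩) B A ∧
  (∀ t : Fin (e + 1), xsite e ℓ t ∈ A) ∧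
  (∀ t : Fin (e + 1), ysite e ℓ B t ∈ A)


/-- The box `{1,…,a}^d × [2]^ℓ` (integer upper bound `a`). -/
def zbox (a : ℤ) (d ℓ : ℕ) : Set (Fin (d + ℓ) → ℤ) :=
  {v | (∀ i : Fin d, 1 ≤ v (low d ℓ i) ∧ v (low d ℓ i) ≤ a) ∧
    ∀ j : Fin ℓ, 1 ≤ v (high d ℓ j) ∧ v (high d ℓ j) ≤ 2}

/-! ### Auxiliary infrastructure for `Tab_growth` -/

lemma adj_update {k : ℕ} (f : Fin k → ℤ) (t : Fin k) (ε : ℤ) (hε : |ε| = 1) :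
    adj f (Function.update f t (f t + ε)) := by
  unfold adj
  rw [Finset.sum_eq_single t]
  · rw [Function.update_self]
    simpa [abs_sub_comm] using hε
  · intro i _ hi
    rw [Function.update_of_ne hi]
    simp
  · simp

lemma nbrs_finite {k : ℕ} (v : Fin k → ℤ) : {w : Fin k → ℤ | adj v w}.Finite := by
  apply Set.Finite.subset (Set.finite_Icc (fun i => v i - 1) (fun i => v i + 1))
  intro w hw
  have key : ∀ i, |v i - w i| ≤ 1 := by
    intro i
    calc |v i - w i| ≤ ∑ j, |v j - w j| :=
      Finset.single_le_sum (f := fun j => |v j - w j|) (fun j _ => abs_nonneg _) (Finset.mem_univ i)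
    _ = 1 := hw
  constructor <;> intro i <;> have := key i <;> rw [abs_le] at this <;> simp <;> omega

lemma iterInf_mono_time {k : ℕ} (S : Set (Fin k → ℤ)) (thr : (Fin k → ℤ) → ℕ)
    (A : Set (Fin k → ℤ)) : Monotone (iterInf S thr A) := by
  apply monotone_nat_of_le_succ
  intro t
  exact Set.subset_union_left

lemma subset_bclosure {k : ℕ} (S : Set (Fin k → ℤ)) (thr : (Fin k → ℤ) → ℕ)
    (A : Set (Fin k → ℤ)) : A ⊆ bclosure S thr A :=
  Set.subset_iUnion (iterInf S thr A) 0

lemma iterInf_mono_A {k : ℕ} (S : Set (Fin k → ℤ)) (thr : (Fin k → ℤ) → ℕ)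
    {A B : Set (Fin k → ℤ)} (h : A ⊆ B) (t : ℕ) :
    iterInf S thr A t ⊆ iterInf S thr B t := by
  induction t with
  | zero => exact h
  | succ t ih =>
    intro v hv
    rcases hv with hv | hv
    · exact Or.inl (ih hv)
    · refine Or.inr ⟨hv.1, le_trans hv.2 ?_⟩
      apply Set.ncard_le_ncard
      · exact fun w hw => ⟨hw.1, ih hw.2⟩
      · exact (nbrs_finite _).subset (fun w hw => hw.1)

lemma bclosure_mono {k : ℕ} (S : Set (Fin k → ℤ)) (thr : (Fin k → ℤ) → ℕ)
    {A B : Set (Fin k → ℤ)} (h : A ⊆ B) : bclosure S thr A ⊆ bclosure S thr B :=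
  Set.iUnion_mono (fun t => iterInf_mono_A S thr h t)

lemma infect2 {k : ℕ} {S : Set (Fin k → ℤ)} {thr : (Fin k → ℤ) → ℕ}
    {A : Set (Fin k → ℤ)} (v : Fin k → ℤ) (hvS : v ∈ S) (hthr : thr v ≤ 2)
    {w1 w2 : Fin k → ℤ} (h1 : w1 ∈ bclosure S thr A) (h2 : w2 ∈ bclosure S thr A)
    (ha1 : adj v w1) (ha2 : adj v w2) (hne : w1 ≠ w2) : v ∈ bclosure S thr A := by
  rw [bclosure, Set.mem_iUnion] at h1 h2 ⊢
  obtain ⟨t1, h1⟩ := h1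
  obtain ⟨t2, h2⟩ := h2
  refine ⟨max t1 t2 + 1, Or.inr ⟨hvS, ?_⟩⟩
  have h1' := iterInf_mono_time S thr A (le_max_left t1 t2) h1
  have h2' := iterInf_mono_time S thr A (le_max_right t1 t2) h2
  calc thr v ≤ 2 := hthr
    _ = ({w1, w2} : Set (Fin k → ℤ)).ncard := (Set.ncard_pair hne).symm
    _ ≤ _ := by
        apply Set.ncard_le_ncard
        · intro w hw
          rcases hw with rfl | hw
          · exact ⟨ha1, h1'⟩
          · rw [Set.mem_singleton_iff] at hw
            subst hw
            exact ⟨ha2, h2'⟩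
        · exact (nbrs_finite v).subset (fun w hw => hw.1)

section Growth

variable (e ℓ n : ℕ) (b : ℤ)

lemma mkSite_low (f : Fin (e + 1) → ℤ) (t : Fin (e + 1)) :
    mkSite e ℓ f (low (e + 1) ℓ t) = f t :=
  Fin.append_left _ _ _

lemma mkSite_high (f : Fin (e + 1) → ℤ) (j : Fin ℓ) :
    mkSite e ℓ f (high (e + 1) ℓ j) = 1 :=
  Fin.append_right _ _ _

lemma eq_append (x : Fin (e + 1 + ℓ) → ℤ) (u : Fin ℓ → ℤ)
    (hx : ∀ j, x (high (e + 1) ℓ j) = u j) :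
    x = Fin.append (fun t => x (low (e + 1) ℓ t)) u := by
  funext i
  refine Fin.addCases (fun i => ?_) (fun j => ?_) i
  · rw [Fin.append_left]
    rfl
  · rw [Fin.append_right, ← hx j]
    rfl

lemma adj_append {g1 g2 : Fin (e + 1) → ℤ} {u : Fin ℓ → ℤ} (h : adj g1 g2) :
    adj (Fin.append g1 u) (Fin.append g2 u) := by
  unfold adj at h ⊢
  rw [Fin.sum_univ_add]
  simp only [Fin.append_left, Fin.append_right, sub_self, abs_zero, Finset.sum_const_zero,
    add_zero]
  exact h

lemma adj_ones_onesPlus (f : Fin (e + 1) → ℤ) (j : Fin ℓ) :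
    adj (Fin.append f (onesVec ℓ)) (Fin.append f (onesPlus ℓ j)) := by
  unfold adj
  rw [Fin.sum_univ_add]
  simp only [Fin.append_left, Fin.append_right, sub_self, abs_zero, Finset.sum_const_zero,
    zero_add]
  rw [Finset.sum_eq_single j]
  · simp [onesVec, onesPlus]
  · intro j' _ hj'
    simp [onesVec, onesPlus, hj']
  · simp

lemma mkSite_ne {f g : Fin (e + 1) → ℤ} (t : Fin (e + 1)) (h : f t ≠ g t) :
    mkSite e ℓ f ≠ mkSite e ℓ g := by
  intro hc
  apply h
  have := congrFun hc (low (e + 1) ℓ t)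
  rwa [mkSite_low, mkSite_low] at this

lemma mkSite_ne_up (f g : Fin (e + 1) → ℤ) (j : Fin ℓ) :
    mkSite e ℓ g ≠ Fin.append f (onesPlus ℓ j) := by
  intro hc
  have := congrFun hc (high (e + 1) ℓ j)
  rw [mkSite_high] at this
  have h2 : Fin.append f (onesPlus ℓ j) (high (e + 1) ℓ j) = onesPlus ℓ j j :=
    Fin.append_right _ _ _
  rw [h2] at this
  simp [onesPlus] at this

/-- The closure we grow. -/
def Cl (A : Set (Fin (e + 1 + ℓ) → ℤ)) : Set (Fin (e + 1 + ℓ) → ℤ) :=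
  bclosure (cstarBox n (e + 1) ℓ) (cstarThr (e + 1) ℓ 2) (zbox b (e + 1) ℓ ∩ A)

variable (A : Set (Fin (e + 1 + ℓ) → ℤ))

lemma mkSite_mem_cstarBox (hbn : b ≤ (n : ℤ)) (f : Fin (e + 1) → ℤ) (hf : ∀ t, 1 ≤ f t ∧ f t ≤ b) :
    mkSite e ℓ f ∈ cstarBox n (e + 1) ℓ := by
  constructor
  · intro i
    rw [mkSite_low]
    exact ⟨(hf i).1, le_trans (hf i).2 hbn⟩
  · intro j
    rw [mkSite_high]
    omega

lemma mkSite_mem_zbox (f : Fin (e + 1) → ℤ) (hf : ∀ t, 1 ≤ f t ∧ f t ≤ b) :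
    mkSite e ℓ f ∈ zbox b (e + 1) ℓ := by
  constructor
  · intro i
    rw [mkSite_low]
    exact hf i
  · intro j
    rw [mkSite_high]
    omega

lemma cstarThr_mkSite (f : Fin (e + 1) → ℤ) : cstarThr (e + 1) ℓ 2 (mkSite e ℓ f) = 2 := by
  unfold cstarThr
  rw [if_pos]
  intro j
  exact mkSite_high e ℓ f j

lemma inf_step (hbn : b ≤ (n : ℤ)) (f g1 g2 : Fin (e + 1) → ℤ) (hf : ∀ t, 1 ≤ f t ∧ f t ≤ b)
    (h1 : adj f g1) (h2 : adj f g2) (t0 : Fin (e + 1)) (hne : g1 t0 ≠ g2 t0)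
    (m1 : mkSite e ℓ g1 ∈ Cl e ℓ n b A) (m2 : mkSite e ℓ g2 ∈ Cl e ℓ n b A) :
    mkSite e ℓ f ∈ Cl e ℓ n b A := by
  exact infect2 _ (mkSite_mem_cstarBox e ℓ n b hbn f hf)
    (le_of_eq (cstarThr_mkSite e ℓ f)) m1 m2
    (adj_append e ℓ h1) (adj_append e ℓ h2) (mkSite_ne e ℓ t0 hne)

lemma inf_step_up (hbn : b ≤ (n : ℤ)) (f g : Fin (e + 1) → ℤ) (hf : ∀ t, 1 ≤ f t ∧ f t ≤ b)
    (h1 : adj f g) (j : Fin ℓ)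
    (m1 : mkSite e ℓ g ∈ Cl e ℓ n b A) (m2 : Fin.append f (onesPlus ℓ j) ∈ Cl e ℓ n b A) :
    mkSite e ℓ f ∈ Cl e ℓ n b A := by
  exact infect2 _ (mkSite_mem_cstarBox e ℓ n b hbn f hf)
    (le_of_eq (cstarThr_mkSite e ℓ f)) m1 m2
    (adj_append e ℓ h1) (adj_ones_onesPlus e ℓ f j) (mkSite_ne_up e ℓ f g j)

end Growth

section Growth2

variable (e ℓ n : ℕ) (b : ℤ)

lemma occ_slab_seed (A : Set (Fin (e + 1 + ℓ) → ℤ)) (τ : Fin (e + 1)) (i s : ℤ)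
    (hi1 : 1 ≤ i) (hib : i ≤ b) (hsb : s ≤ b)
    (hocc : occ A (slab (e + 1) ℓ τ i s (onesVec ℓ))) :
    ∃ g : Fin (e + 1) → ℤ, g τ = i ∧ (∀ t, t ≠ τ → 1 ≤ g t ∧ g t ≤ s) ∧
      mkSite e ℓ g ∈ Cl e ℓ n b A := by
  obtain ⟨x, hxA, hxS⟩ := hocc
  obtain ⟨hx1, hx2, hx3⟩ := hxS
  refine ⟨fun t => x (low (e + 1) ℓ t), hx1, fun t ht => hx2 t ht, ?_⟩
  have hxeq : x = mkSite e ℓ (fun t => x (low (e + 1) ℓ t)) :=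
    eq_append e ℓ x (onesVec ℓ) (fun j => hx3 j)
  rw [← hxeq]
  apply subset_bclosure
  refine ⟨⟨?_, ?_⟩, hxA⟩
  · intro t
    by_cases ht : t = τ
    · subst ht; rw [hx1]; exact ⟨hi1, hib⟩
    · exact ⟨(hx2 t ht).1, le_trans (hx2 t ht).2 hsb⟩
  · intro j
    rw [hx3 j]
    simp [onesVec]

lemma occ_slabU_seed (A : Set (Fin (e + 1 + ℓ) → ℤ)) (τ : Fin (e + 1)) (i s : ℤ) (j : Fin ℓ)
    (hi1 : 1 ≤ i) (hib : i ≤ b) (hsb : s ≤ b)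
    (hocc : occ A (slab (e + 1) ℓ τ i s (onesPlus ℓ j))) :
    ∃ g : Fin (e + 1) → ℤ, g τ = i ∧ (∀ t, t ≠ τ → 1 ≤ g t ∧ g t ≤ s) ∧
      Fin.append g (onesPlus ℓ j) ∈ Cl e ℓ n b A := by
  obtain ⟨x, hxA, hxS⟩ := hocc
  obtain ⟨hx1, hx2, hx3⟩ := hxS
  refine ⟨fun t => x (low (e + 1) ℓ t), hx1, fun t ht => hx2 t ht, ?_⟩
  have hxeq : x = Fin.append (fun t => x (low (e + 1) ℓ t)) (onesPlus ℓ j) :=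
    eq_append e ℓ x (onesPlus ℓ j) (fun j' => hx3 j')
  rw [← hxeq]
  apply subset_bclosure
  refine ⟨⟨?_, ?_⟩, hxA⟩
  · intro t
    by_cases ht : t = τ
    · subst ht; rw [hx1]; exact ⟨hi1, hib⟩
    · exact ⟨(hx2 t ht).1, le_trans (hx2 t ht).2 hsb⟩
  · intro j'
    rw [hx3 j']
    unfold onesPlus
    split <;> omega

lemma slab_spread (hbn : b ≤ (n : ℤ)) (A : Set (Fin (e + 1 + ℓ) → ℤ))
    (τ : Fin (e + 1)) (i : ℤ) (hi : 1 ≤ i) (hib : i ≤ b)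
    (s : Fin (e + 1) → ℤ) (hs : ∀ t, 1 ≤ s t ∧ s t ≤ b)
    (hbase : ∀ f : Fin (e + 1) → ℤ, f τ = i - 1 → (∀ t, t ≠ τ → 1 ≤ f t ∧ f t ≤ s t) →
      mkSite e ℓ f ∈ Cl e ℓ n b A)
    (w : Fin (e + 1) → ℤ) (hwτ : w τ = i) (hw : ∀ t, t ≠ τ → 1 ≤ w t ∧ w t ≤ s t)
    (hwC : mkSite e ℓ w ∈ Cl e ℓ n b A) :
    ∀ f : Fin (e + 1) → ℤ, f τ = i → (∀ t, t ≠ τ → 1 ≤ f t ∧ f t ≤ s t) →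
      mkSite e ℓ f ∈ Cl e ℓ n b A := by
  suffices H : ∀ N : ℕ, ∀ f : Fin (e + 1) → ℤ, (∑ t, (f t - w t).natAbs) = N → f τ = i →
      (∀ t, t ≠ τ → 1 ≤ f t ∧ f t ≤ s t) → mkSite e ℓ f ∈ Cl e ℓ n b A by
    exact fun f hfτ hf => H _ f rfl hfτ hf
  intro N
  induction N using Nat.strong_induction_on with
  | _ N ih =>
    intro f hN hfτ hf
    by_cases hfw : f = w
    · subst hfw; exact hwC
    · obtain ⟨t, ht⟩ := Function.ne_iff.mp hfw
      have htτ : t ≠ τ := by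
        rintro rfl
        rw [hfτ, hwτ] at ht
        exact ht rfl
      set ε : ℤ := if w t ≤ f t then -1 else 1 with hεdef
      have hε : |ε| = 1 := by rw [hεdef]; split <;> simp
      set f' := Function.update f t (f t + ε) with hf'def
      have hf't : f' t = f t + ε := Function.update_self _ _ _
      have hf'other : ∀ u, u ≠ t → f' u = f u := fun u hu => Function.update_of_ne hu _ _
      have hmeas : (∑ u, (f' u - w u).natAbs) < N := by
        rw [← hN]
        apply Finset.sum_lt_sum
        · intro u _
          by_cases hu : u = t
          · subst hu
            rw [hf't, hεdef]
            split <;> omega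
          · rw [hf'other u hu]
        · refine ⟨t, Finset.mem_univ t, ?_⟩
          rw [hf't, hεdef]
          have := ht
          split <;> omega
      have hf'τ : f' τ = i := by rw [hf'other τ (Ne.symm htτ)]; exact hfτ
      have hf'bd : ∀ u, u ≠ τ → 1 ≤ f' u ∧ f' u ≤ s u := by
        intro u hu
        by_cases hut : u = t
        · subst hut
          rw [hf't, hεdef]
          have h1 := hf u hu
          have h2 := hw u hu
          split <;> omega
        · rw [hf'other u hut]; exact hf u hu
      have hC1 : mkSite e ℓ f' ∈ Cl e ℓ n b A := ih _ hmeas f' rfl hf'τ hf'bd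
      set f'' := Function.update f τ (i - 1) with hf''def
      have hC2 : mkSite e ℓ f'' ∈ Cl e ℓ n b A := by
        apply hbase
        · exact Function.update_self _ _ _
        · intro u hu
          have he2 : f'' u = f u := Function.update_of_ne hu _ _
          rw [he2]
          exact hf u hu
      have hadj1 : adj f f' := adj_update f t ε hε
      have hadj2 : adj f f'' := by
        have : f'' = Function.update f τ (f τ + (-1)) := by
          rw [hf''def, hfτ]; ring_nf
        rw [this]
        exact adj_update f τ (-1) (by simp)
      have hneq : f' τ ≠ f'' τ := by
        rw [hf'τ, hf''def, Function.update_self]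
        omega
      refine inf_step e ℓ n b A hbn f f' f'' ?_ hadj1 hadj2 τ hneq hC1 hC2
      intro u
      by_cases hu : u = τ
      · subst hu; rw [hfτ]; exact ⟨hi, hib⟩
      · exact ⟨(hf u hu).1, le_trans (hf u hu).2 (hs u).2⟩

end Growth2

section Growth3

variable (e ℓ n : ℕ) (b : ℤ)

lemma crossU (hbn : b ≤ (n : ℤ)) (A : Set (Fin (e + 1 + ℓ) → ℤ))
    (τ : Fin (e + 1)) (i : ℤ) (hi : 1 ≤ i) (hib : i ≤ b)
    (c : ℤ) (hc1 : 1 ≤ c) (hcb : c ≤ b)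
    (hbase : ∀ f : Fin (e + 1) → ℤ, f τ = i - 1 → (∀ t, t ≠ τ → 1 ≤ f t ∧ f t ≤ c) →
      mkSite e ℓ f ∈ Cl e ℓ n b A)
    (hocc : occ A (slab (e + 1) ℓ τ i c (onesVec ℓ))) :
    ∀ f : Fin (e + 1) → ℤ, f τ = i → (∀ t, t ≠ τ → 1 ≤ f t ∧ f t ≤ c) →
      mkSite e ℓ f ∈ Cl e ℓ n b A := by
  obtain ⟨w, hwτ, hw, hwC⟩ := occ_slab_seed e ℓ n b A τ i c hi hib hcb hocc
  exact slab_spread e ℓ n b hbn A τ i hi hib (fun _ => c) (fun t => ⟨hc1, hcb⟩)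
    hbase w hwτ hw hwC

lemma cross (hbn : b ≤ (n : ℤ)) (A : Set (Fin (e + 1 + ℓ) → ℤ))
    (τ : Fin (e + 1)) (i : ℤ) (hi : 2 ≤ i) (hi1b : i + 1 ≤ b)
    (c : ℤ) (hc1 : 1 ≤ c) (hcb : c ≤ b)
    (hbase : ∀ f : Fin (e + 1) → ℤ, f τ = i - 1 → (∀ t, t ≠ τ → 1 ≤ f t ∧ f t ≤ c) →
      mkSite e ℓ f ∈ Cl e ℓ n b A)
    (hocc : occ A (slab (e + 1) ℓ τ i c (onesVec ℓ)) ∨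
      occ A (slab (e + 1) ℓ τ (i + 1) c (onesVec ℓ)) ∨
      ∃ j : Fin ℓ, occ A (slab (e + 1) ℓ τ i c (onesPlus ℓ j))) :
    ∀ f : Fin (e + 1) → ℤ, f τ = i → (∀ t, t ≠ τ → 1 ≤ f t ∧ f t ≤ c) →
      mkSite e ℓ f ∈ Cl e ℓ n b A := by
  rcases hocc with h | h | ⟨j, h⟩
  · exact crossU e ℓ n b hbn A τ i (by omega) (by omega) c hc1 hcb hbase h
  · -- seed in the slab at `i + 1`; infect the site below it, then spread at level `i`
    obtain ⟨g, hgτ, hg, hgC⟩ := occ_slab_seed e ℓ n b A τ (i + 1) c (by omega) hi1b hcb h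
    set g' := Function.update g τ i with hg'def
    have hg'τ : g' τ = i := Function.update_self _ _ _
    have hg'other : ∀ u, u ≠ τ → g' u = g u := fun u hu => Function.update_of_ne hu _ _
    have e1 : Function.update g' τ (i + 1) = g := by
      rw [hg'def, Function.update_idem, ← hgτ, Function.update_eq_self]
    have hadj1 : adj g' g := by
      have h2 := adj_update g' τ 1 (by simp)
      rw [hg'τ] at h2
      rwa [e1] at h2
    set g'' := Function.update g' τ (i - 1) with hg''def
    have hg''τ : g'' τ = i - 1 := Function.update_self _ _ _
    have hadj2 : adj g' g'' := by
      have h2 := adj_update g' τ (-1) (by simp)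
      rw [hg'τ] at h2
      have e2 : i + -1 = i - 1 := by ring
      rwa [e2] at h2
    have hC2 : mkSite e ℓ g'' ∈ Cl e ℓ n b A := by
      apply hbase g'' hg''τ
      intro u hu
      have e3 : g'' u = g u := by
        rw [hg''def, Function.update_of_ne hu, hg'other u hu]
      rw [e3]
      exact hg u hu
    have hne : g τ ≠ g'' τ := by rw [hgτ, hg''τ]; omega
    have hg'C : mkSite e ℓ g' ∈ Cl e ℓ n b A := by
      refine inf_step e ℓ n b A hbn g' g g'' ?_ hadj1 hadj2 τ hne hgC hC2
      intro u
      by_cases hu : u = τ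
      · subst hu; rw [hg'τ]; omega
      · rw [hg'other u hu]
        exact ⟨(hg u hu).1, le_trans (hg u hu).2 hcb⟩
    refine slab_spread e ℓ n b hbn A τ i (by omega) (by omega) (fun _ => c)
      (fun t => ⟨hc1, hcb⟩) hbase g' hg'τ ?_ hg'C
    intro u hu
    rw [hg'other u hu]
    exact hg u hu
  · -- seed in the upper layer above the slab at `i`
    obtain ⟨g, hgτ, hg, hgU⟩ := occ_slabU_seed e ℓ n b A τ i c j (by omega) (by omega) hcb h
    set g'' := Function.update g τ (i - 1) with hg''def
    have hg''τ : g'' τ = i - 1 := Function.update_self _ _ _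
    have hadj2 : adj g g'' := by
      have h2 := adj_update g τ (-1) (by simp)
      rw [hgτ] at h2
      have e2 : i + -1 = i - 1 := by ring
      rwa [e2] at h2
    have hC2 : mkSite e ℓ g'' ∈ Cl e ℓ n b A := by
      apply hbase g'' hg''τ
      intro u hu
      have e3 : g'' u = g u := by rw [hg''def, Function.update_of_ne hu]
      rw [e3]
      exact hg u hu
    have hgC : mkSite e ℓ g ∈ Cl e ℓ n b A := by
      refine inf_step_up e ℓ n b A hbn g g'' ?_ hadj2 j hC2 hgU
      intro u
      by_cases hu : u = τ
      · subst hu; rw [hgτ]; omega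
      · exact ⟨(hg u hu).1, le_trans (hg u hu).2 hcb⟩
    exact slab_spread e ℓ n b hbn A τ i (by omega) (by omega) (fun _ => c)
      (fun t => ⟨hc1, hcb⟩) hbase g hgτ hg hgC

end Growth3

lemma adj_update_sub {k : ℕ} (f : Fin k → ℤ) (t : Fin k) :
    adj f (Function.update f t (f t - 1)) := by
  have h := adj_update f t (-1) (by simp)
  have e2 : f t + -1 = f t - 1 := by ring
  rwa [e2] at h

lemma adj_update_add {k : ℕ} (f : Fin k → ℤ) (t : Fin k) :
    adj f (Function.update f t (f t + 1)) := adj_update f t 1 (by simp)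

lemma update_snoc_last {e : ℕ} (u : Fin e → ℤ) (x y : ℤ) :
    Function.update (Fin.snoc u x : Fin (e+1) → ℤ) (Fin.last e) y = (Fin.snoc u y : Fin (e+1) → ℤ) := by
  funext i
  by_cases hi : i = Fin.last e
  · subst hi
    rw [Function.update_self]
    simp
  · rw [Function.update_of_ne hi]
    obtain ⟨j, hj⟩ := Fin.exists_castSucc_eq.mpr hi
    subst hj
    simp

/-- **Lemma (Statement 7).** Write `d = e + 1` with `e ≥ 1` (so `d ≥ 2`). Let `a ≥ 1` and
`b⃗ ∈ [n]^{d−1}` with `b = max_t b⃗ t` satisfying `a + 3 ≤ b ≤ n`. For every initially infected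
set `A ⊆ [n]^d × [2]^ℓ`: if `{1,…,a}^d × [2]^ℓ` is internally semi-spanned in
`C*([n]^d × [2]^ℓ, 2)` and the event `T_a^{b⃗}` holds, then `{1,…,b}^d × [2]^ℓ` is
internally semi-spanned in `C*([n]^d × [2]^ℓ, 2)`. -/
theorem Tab_growth (e ℓ n : ℕ) (he : 1 ≤ e) (a : ℤ) (ha : 1 ≤ a)
    (bvec : Fin e → ℤ) (hbv : ∀ t, 1 ≤ bvec t ∧ bvec t ≤ (n : ℤ))
    (b : ℤ) (hbmax : (∀ t, bvec t ≤ b) ∧ ∃ t, bvec t = b)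
    (hab : a + 3 ≤ b) (hbn : b ≤ (n : ℤ))
    (A : Set (Fin (e + 1 + ℓ) → ℤ)) (hA : A ⊆ cstarBox n (e + 1) ℓ)
    (hspan : issp n (e + 1) ℓ 2 (zbox a (e + 1) ℓ) A)
    (hT : Tab e ℓ a bvec b A) :
    issp n (e + 1) ℓ 2 (zbox b (e + 1) ℓ) A := by
  obtain ⟨⟨hT1a, hT1b⟩, hT2, hT3, hT4, hT5, hT6, hT7⟩ := hT
  obtain ⟨hbmax1, hbmax2⟩ := hbmax
  set τL : Fin (e + 1) := Fin.last e with hτLdef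
  -- base: the bottom of `[a]^d` is in the closure
  have hbase0 : ∀ f : Fin (e + 1) → ℤ, (∀ t, 1 ≤ f t ∧ f t ≤ a) →
      mkSite e ℓ f ∈ Cl e ℓ n b A := by
    intro f hf
    have h1 : mkSite e ℓ f ∈ zbox a (e + 1) ℓ ∩ bottom n (e + 1) ℓ := by
      refine ⟨⟨?_, ?_⟩, ?_, ?_⟩
      · intro i; rw [mkSite_low]; exact hf i
      · intro j; rw [mkSite_high]; omega
      · intro i; rw [mkSite_low]
        have := hf i
        omega
      · intro j; exact mkSite_high e ℓ f j
    have h2 := hspan h1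
    refine bclosure_mono _ _ ?_ h2
    intro x hx
    refine ⟨⟨?_, hx.1.2⟩, hx.2⟩
    intro i
    have := hx.1.1 i
    omega
  -- growth of the arms in directions `t ≠ d`
  have arm : ∀ t : Fin e, ∀ i : ℤ, a ≤ i → i ≤ b →
      ∀ f : Fin (e + 1) → ℤ, 1 ≤ f t.castSucc → f t.castSucc ≤ i →
        (∀ t', t' ≠ t.castSucc → 1 ≤ f t' ∧ f t' ≤ a) → mkSite e ℓ f ∈ Cl e ℓ n b A := by
    intro t
    refine Int.le_induction (motive := fun i _ => i ≤ b →
      ∀ f : Fin (e + 1) → ℤ, 1 ≤ f t.castSucc → f t.castSucc ≤ i →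
        (∀ t', t' ≠ t.castSucc → 1 ≤ f t' ∧ f t' ≤ a) → mkSite e ℓ f ∈ Cl e ℓ n b A) ?_ ?_
    · intro _ f hfτ1 hfτ2 hf
      apply hbase0
      intro u
      by_cases hu : u = t.castSucc
      · subst hu; exact ⟨hfτ1, hfτ2⟩
      · exact hf u hu
    · intro i hai ih hib f hfτ1 hfτ2 hf
      by_cases hcase : f t.castSucc ≤ i
      · exact ih (by omega) f hfτ1 hcase hf
      · have hfτ' : f t.castSucc = i + 1 := by omega
        have hbase' : ∀ g : Fin (e + 1) → ℤ, g t.castSucc = (i + 1) - 1 →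
            (∀ u, u ≠ t.castSucc → 1 ≤ g u ∧ g u ≤ a) → mkSite e ℓ g ∈ Cl e ℓ n b A := by
          intro g hg hgb
          exact ih (by omega) g (by omega) (by omega) hgb
        by_cases hlast : i + 1 ≤ b - 1
        · exact cross e ℓ n b hbn A t.castSucc (i + 1) (by omega) (by omega) a ha (by omega)
            hbase' (hT3 t (i + 1) (by omega) hlast) f hfτ' hf
        · have hi1b : i + 1 = b := by omega
          rw [hi1b] at hfτ' hbase'
          exact crossU e ℓ n b hbn A t.castSucc b (by omega) le_rfl a ha (by omega)
            hbase' (hT4 t) f hfτ' hf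
  -- corner filling: the set `[b]^{d-1} × [a]` (in the bottom layer) is infected
  have fat : ∀ f : Fin (e + 1) → ℤ, (∀ u, 1 ≤ f u) → (∀ t : Fin e, f t.castSucc ≤ b) →
      f τL ≤ a → mkSite e ℓ f ∈ Cl e ℓ n b A := by
    suffices H : ∀ N : ℕ, ∀ f : Fin (e + 1) → ℤ, (∑ t : Fin e, (f t.castSucc - a).toNat) = N →
        (∀ u, 1 ≤ f u) → (∀ t : Fin e, f t.castSucc ≤ b) → f τL ≤ a →
        mkSite e ℓ f ∈ Cl e ℓ n b A by
      exact fun f h1 h2 h3 => H _ f rfl h1 h2 h3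
    intro N
    induction N using Nat.strong_induction_on with
    | _ N ih =>
      intro f hN h1 h2 h3
      by_cases hall : ∀ t : Fin e, f t.castSucc ≤ a
      · apply hbase0
        intro u
        refine ⟨h1 u, ?_⟩
        by_cases hu : u = τL
        · subst hu; exact h3
        · obtain ⟨t', ht'⟩ := Fin.exists_castSucc_eq.mpr hu
          rw [← ht']
          exact hall t'
      · push_neg at hall
        obtain ⟨t, ht⟩ := hall
        by_cases hone : ∀ t' : Fin e, t' ≠ t → f t'.castSucc ≤ a
        · apply arm t b (by omega) le_rfl f (h1 _) (h2 t)
          intro u hu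
          refine ⟨h1 u, ?_⟩
          by_cases hu2 : u = τL
          · subst hu2; exact h3
          · obtain ⟨t', ht'⟩ := Fin.exists_castSucc_eq.mpr hu2
            have : t' ≠ t := by
              rintro rfl
              exact hu ht'.symm
            rw [← ht']
            exact hone t' this
        · push_neg at hone
          obtain ⟨t', ht'ne, ht'⟩ := hone
          set f1 := Function.update f t.castSucc (f t.castSucc - 1) with hf1def
          set f2 := Function.update f t'.castSucc (f t'.castSucc - 1) with hf2def
          have hf1val : ∀ u : Fin e, f1 u.castSucc =
              if u = t then f t.castSucc - 1 else f u.castSucc := by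
            intro u
            rw [hf1def, Function.update_apply]
            by_cases hu : u = t
            · subst hu; rw [if_pos rfl, if_pos rfl]
            · rw [if_neg (fun hc => hu (Fin.castSucc_inj.mp hc)), if_neg hu]
          have hf2val : ∀ u : Fin e, f2 u.castSucc =
              if u = t' then f t'.castSucc - 1 else f u.castSucc := by
            intro u
            rw [hf2def, Function.update_apply]
            by_cases hu : u = t'
            · subst hu; rw [if_pos rfl, if_pos rfl]
            · rw [if_neg (fun hc => hu (Fin.castSucc_inj.mp hc)), if_neg hu]
          have hlastne : ∀ s : Fin e, τL ≠ s.castSucc := by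
            intro s
            exact (Fin.castSucc_lt_last s).ne'
          have hmeas1 : (∑ u : Fin e, (f1 u.castSucc - a).toNat) < N := by
            rw [← hN]
            apply Finset.sum_lt_sum
            · intro u _
              rw [hf1val u]
              by_cases hu : u = t
              · subst hu; rw [if_pos rfl]; omega
              · rw [if_neg hu]
            · refine ⟨t, Finset.mem_univ t, ?_⟩
              rw [hf1val t, if_pos rfl]
              omega
          have hmeas2 : (∑ u : Fin e, (f2 u.castSucc - a).toNat) < N := by
            rw [← hN]
            apply Finset.sum_lt_sum
            · intro u _
              rw [hf2val u]
              by_cases hu : u = t'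
              · subst hu; rw [if_pos rfl]; omega
              · rw [if_neg hu]
            · refine ⟨t', Finset.mem_univ t', ?_⟩
              rw [hf2val t', if_pos rfl]
              omega
          have hC1 : mkSite e ℓ f1 ∈ Cl e ℓ n b A := by
            apply ih _ hmeas1 f1 rfl
            · intro u
              by_cases hu : u = t.castSucc
              · subst hu
                rw [hf1def, Function.update_self]
                omega
              · rw [hf1def, Function.update_of_ne hu]
                exact h1 u
            · intro u
              rw [hf1val u]
              by_cases hu : u = t
              · rw [if_pos hu]; have := h2 t; omega
              · rw [if_neg hu]; exact h2 u
            · rw [hf1def, Function.update_of_ne (hlastne t)]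
              exact h3
          have hC2 : mkSite e ℓ f2 ∈ Cl e ℓ n b A := by
            apply ih _ hmeas2 f2 rfl
            · intro u
              by_cases hu : u = t'.castSucc
              · subst hu
                rw [hf2def, Function.update_self]
                omega
              · rw [hf2def, Function.update_of_ne hu]
                exact h1 u
            · intro u
              rw [hf2val u]
              by_cases hu : u = t'
              · rw [if_pos hu]; have := h2 t'; omega
              · rw [if_neg hu]; exact h2 u
            · rw [hf2def, Function.update_of_ne (hlastne t')]
              exact h3
          have hne : f1 t.castSucc ≠ f2 t.castSucc := by
            rw [hf1def, Function.update_self, hf2def,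
              Function.update_of_ne (fun hc => ht'ne (Fin.castSucc_inj.mp hc).symm)]
            omega
          refine inf_step e ℓ n b A hbn f f1 f2 ?_ (adj_update_sub f t.castSucc)
            (adj_update_sub f t'.castSucc) t.castSucc hne hC1 hC2
          intro u
          refine ⟨h1 u, ?_⟩
          by_cases hu : u = τL
          · subst hu; omega
          · obtain ⟨s, hs⟩ := Fin.exists_castSucc_eq.mpr hu
            rw [← hs]
            exact h2 s
  -- the seed site `(b⃗, a+2)` and its column
  have hsnocbd : ∀ x : ℤ, 1 ≤ x → x ≤ b → ∀ u : Fin (e + 1),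
      1 ≤ (Fin.snoc bvec x : Fin (e + 1) → ℤ) u ∧ (Fin.snoc bvec x : Fin (e + 1) → ℤ) u ≤ b := by
    intro x hx1 hx2 u
    by_cases hu : u = Fin.last e
    · subst hu; simp [hx1, hx2]
    · obtain ⟨s, hs⟩ := Fin.exists_castSucc_eq.mpr hu
      rw [← hs]
      simp only [Fin.snoc_castSucc]
      exact ⟨(hbv s).1, hbmax1 s⟩
  have hsnoclast : ∀ x : ℤ, (Fin.snoc bvec x : Fin (e + 1) → ℤ) τL = x := by
    intro x; simp [hτLdef]
  have hm : mkSite e ℓ (Fin.snoc bvec (a + 2)) ∈ Cl e ℓ n b A := by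
    apply subset_bclosure
    exact ⟨mkSite_mem_zbox e ℓ b _ (hsnocbd (a + 2) (by omega) (by omega)), hT5⟩
  have hq : mkSite e ℓ (Fin.snoc bvec (a + 1)) ∈ Cl e ℓ n b A := by
    have hadj1 : adj (Fin.snoc bvec (a + 1) : Fin (e + 1) → ℤ) (Fin.snoc bvec (a + 2)) := by
      have h := adj_update_add (Fin.snoc bvec (a + 1) : Fin (e + 1) → ℤ) τL
      rw [hsnoclast, hτLdef, update_snoc_last] at h
      have e2 : a + 1 + 1 = a + 2 := by ring
      rwa [e2] at h
    have hadj2 : adj (Fin.snoc bvec (a + 1) : Fin (e + 1) → ℤ) (Fin.snoc bvec a) := by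
      have h := adj_update_sub (Fin.snoc bvec (a + 1) : Fin (e + 1) → ℤ) τL
      rw [hsnoclast, hτLdef, update_snoc_last] at h
      have e2 : a + 1 - 1 = a := by ring
      rwa [e2] at h
    have hC2 : mkSite e ℓ (Fin.snoc bvec a) ∈ Cl e ℓ n b A := by
      apply fat _ (fun u => (hsnocbd a (by omega) (by omega) u).1)
        (fun t => (hsnocbd a (by omega) (by omega) t.castSucc).2)
      rw [hsnoclast]
    have hne : (Fin.snoc bvec (a + 2) : Fin (e + 1) → ℤ) τL ≠
        (Fin.snoc bvec a : Fin (e + 1) → ℤ) τL := by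
      rw [hsnoclast, hsnoclast]; omega
    exact inf_step e ℓ n b A hbn _ _ _ (hsnocbd (a + 1) (by omega) (by omega))
      hadj1 hadj2 τL hne hm hC2
  -- growth in direction `d`
  have lev : ∀ i : ℤ, a ≤ i → i ≤ b → ∀ f : Fin (e + 1) → ℤ,
      (∀ u, 1 ≤ f u ∧ f u ≤ b) → f τL ≤ i → mkSite e ℓ f ∈ Cl e ℓ n b A := by
    refine Int.le_induction (motive := fun i _ => i ≤ b →
      ∀ f : Fin (e + 1) → ℤ, (∀ u, 1 ≤ f u ∧ f u ≤ b) → f τL ≤ i →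
        mkSite e ℓ f ∈ Cl e ℓ n b A) ?_ ?_
    · intro _ f hf hfτ
      exact fat f (fun u => (hf u).1) (fun t => (hf t.castSucc).2) hfτ
    · intro i hai ih hib f hf hfτ
      by_cases hcase : f τL ≤ i
      · exact ih (by omega) f hf hcase
      · have hfτ' : f τL = i + 1 := by omega
        have hbase' : ∀ g : Fin (e + 1) → ℤ, g τL = (i + 1) - 1 →
            (∀ u, u ≠ τL → 1 ≤ g u ∧ g u ≤ b) → mkSite e ℓ g ∈ Cl e ℓ n b A := by
          intro g hg hgb
          apply ih (by omega) g ?_ (by omega)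
          intro u
          by_cases hu : u = τL
          · subst hu; omega
          · exact hgb u hu
        have hfb : ∀ u, u ≠ τL → 1 ≤ f u ∧ f u ≤ b := fun u _ => hf u
        by_cases hi1 : i + 1 = a + 1
        · -- spread the slab at height `a+1` from the seed `(b⃗, a+1)`
          rw [hi1] at hfτ' hbase'
          refine slab_spread e ℓ n b hbn A τL (a + 1) (by omega) (by omega)
            (fun _ => b) (fun t => ⟨(by omega : (1:ℤ) ≤ b), le_rfl⟩) hbase' (Fin.snoc bvec (a + 1))
            (hsnoclast (a + 1)) ?_ hq f hfτ' hfb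
          intro u hu
          exact hsnocbd (a + 1) (by omega) (by omega) u
        · by_cases hi2 : i + 1 = a + 2
          · rw [hi2] at hfτ' hbase'
            refine slab_spread e ℓ n b hbn A τL (a + 2) (by omega) (by omega)
              (fun _ => b) (fun t => ⟨(by omega : (1:ℤ) ≤ b), le_rfl⟩) hbase' (Fin.snoc bvec (a + 2))
              (hsnoclast (a + 2)) ?_ hm f hfτ' hfb
            intro u hu
            exact hsnocbd (a + 2) (by omega) (by omega) u
          · by_cases hi3 : i + 1 ≤ b - 1
            · exact cross e ℓ n b hbn A τL (i + 1) (by omega) (by omega) b (by omega) le_rfl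
                hbase' (hT6 (i + 1) (by omega) hi3) f hfτ' hfb
            · have hi4 : i + 1 = b := by omega
              rw [hi4] at hfτ' hbase'
              exact crossU e ℓ n b hbn A τL b (by omega) le_rfl b (by omega) le_rfl
                hbase' hT7 f hfτ' hfb
  -- conclusion
  intro v hv
  obtain ⟨hvz, hvbot⟩ := hv
  have hveq : v = mkSite e ℓ (fun t => v (low (e + 1) ℓ t)) :=
    eq_append e ℓ v (onesVec ℓ) (fun j => hvbot.2 j)
  rw [hveq]
  exact lev b (by omega) le_rfl _ (fun u => hvz.1 u) (hvz.1 τL).2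

end Boot
end

section
/- Fix an integer d ≥ 2 and a constant c with 0 < c < 1/4. For all sufficiently small p > 0, setting m = c·p^{−1/(2d−2)} (assumed to be a positive integer), the number of sequences (a_1, b⃗_1, ..., a_m, b⃗_m) — where each a_i is a positive integer and each b⃗_i = (b_i^{(1)},...,b_i^{(d−1)}) is a (d−1)-tuple of positive integers with all coordinates at most b_i := max_t b_i^{(t)} — satisfying p^{−1/(d−1)} ≤ a_1 < b_1 ≤ a_2 < b_2 ≤ ... ≤ a_m < b_m ≤ 2p^{−1/(d−1)} and 3 ≤ b_i − a_i ≤ p^{−1/(2d−2)} for all i ∈ [m], is at least (1/(4cp))^m. -/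
open Filter

namespace Boot

set_option maxHeartbeats 1000000 in
/-- **Lemma (Statement 11).** Write `d = e + 1` with `e ≥ 1` (so `d ≥ 2`), and fix a constant
`0 < c < 1/4`. For all sufficiently small `p > 0`, if `m = c·p^{−1/(2d−2)}` is a positive
integer, then the number of sequences `(a_i, b⃗_i)_{i=1}^m` of positive integers (with
`b_i = max_t b⃗_i t`) satisfying
`p^{−1/(d−1)} ≤ a₁ < b₁ ≤ a₂ < b₂ ≤ … ≤ a_m < b_m ≤ 2p^{−1/(d−1)}` and
`3 ≤ b_i − a_i ≤ p^{−1/(2d−2)}` for all `i`, is at least `(1/(4cp))^m`. -/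
theorem count_sequences (e : ℕ) (he : 1 ≤ e) (c : ℝ) (hc : 0 < c) (hc4 : c < 1 / 4) :
    ∃ p0 : ℝ, 0 < p0 ∧ ∀ p : ℝ, 0 < p → p < p0 → ∀ m : ℕ, ∀ hm : 1 ≤ m,
      (m : ℝ) = c * p ^ (-(1 : ℝ) / (2 * (e : ℝ))) →
      (1 / (4 * c * p)) ^ m ≤
        (({x : (Fin m → ℤ) × (Fin m → Fin e → ℤ) |
            (∀ i, 1 ≤ x.1 i) ∧ (∀ i t, 1 ≤ x.2 i t) ∧
            ∃ b : Fin m → ℤ,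
              (∀ i, (∀ t, x.2 i t ≤ b i) ∧ ∃ t, x.2 i t = b i) ∧
              p ^ (-(1 : ℝ) / (e : ℝ)) ≤ ((x.1 ⟨0, hm⟩ : ℤ) : ℝ) ∧
              (∀ i, x.1 i < b i) ∧
              (∀ i : Fin m, ∀ h : (i : ℕ) + 1 < m, b i ≤ x.1 ⟨(i : ℕ) + 1, h⟩) ∧
              ((b ⟨m - 1, Nat.sub_lt hm Nat.one_pos⟩ : ℤ) : ℝ) ≤
                2 * p ^ (-(1 : ℝ) / (e : ℝ)) ∧
              (∀ i, 3 ≤ b i - x.1 i ∧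
                ((b i - x.1 i : ℤ) : ℝ) ≤ p ^ (-(1 : ℝ) / (2 * (e : ℝ))))}.ncard : ℕ) : ℝ) := by
  have he0 : (0:ℝ) < (e:ℝ) := by exact_mod_cast he
  refine ⟨(16:ℝ) ^ (-(2*(e:ℝ))), Real.rpow_pos_of_pos (by norm_num) _, ?_⟩
  intro p hp hp0 m hm hmeq
  set q : ℝ := p ^ (-(1:ℝ)/(2*(e:ℝ))) with hqdef
  have hq0 : 0 < q := Real.rpow_pos_of_pos hp _
  have hs : (0:ℝ) < (1:ℝ)/(2*(e:ℝ)) := by positivity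
  -- q > 16
  have hq16 : (16:ℝ) < q := by
    have h1 : p ^ ((1:ℝ)/(2*(e:ℝ))) < ((16:ℝ) ^ (-(2*(e:ℝ)))) ^ ((1:ℝ)/(2*(e:ℝ))) :=
      Real.rpow_lt_rpow hp.le hp0 hs
    have h2 : ((16:ℝ) ^ (-(2*(e:ℝ)))) ^ ((1:ℝ)/(2*(e:ℝ))) = 16⁻¹ := by
      rw [← Real.rpow_mul (by norm_num : (0:ℝ) ≤ 16)]
      rw [show (-(2*(e:ℝ))) * ((1:ℝ)/(2*(e:ℝ))) = -1 by field_simp]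
      rw [Real.rpow_neg_one]
    have h3 : q = (p ^ ((1:ℝ)/(2*(e:ℝ))))⁻¹ := by
      rw [hqdef, show (-(1:ℝ)/(2*(e:ℝ))) = -((1:ℝ)/(2*(e:ℝ))) by ring, Real.rpow_neg hp.le]
    rw [h2] at h1
    have hppos : 0 < p ^ ((1:ℝ)/(2*(e:ℝ))) := Real.rpow_pos_of_pos hp _
    rw [h3, show (16:ℝ) = (16⁻¹)⁻¹ by norm_num]
    exact inv_strictAnti₀ hppos h1
  -- rewrite p-powers in terms of q
  have hq2 : p ^ (-(1:ℝ)/(e:ℝ)) = q^2 := by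
    rw [hqdef, ← Real.rpow_natCast (p ^ (-(1:ℝ)/(2*(e:ℝ)))) 2, ← Real.rpow_mul hp.le]
    congr 1
    push_cast
    try field_simp
    try ring
  have hqe : q ^ (2*e) = 1/p := by
    rw [hqdef, ← Real.rpow_natCast (p ^ (-(1:ℝ)/(2*(e:ℝ)))) (2*e), ← Real.rpow_mul hp.le]
    rw [show (-(1:ℝ)/(2*(e:ℝ))) * ((2*e : ℕ) : ℝ) = -1 by push_cast; field_simp]
    rw [Real.rpow_neg_one, one_div]
  rw [hq2]
  -- integer parameters
  set F : ℤ := ⌊q^2⌋ with hFdef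
  set S : ℤ := ⌈q^2⌉ with hSdef
  set G : ℤ := ⌊q⌋ with hGdef
  set L : ℤ := F / (m:ℤ) with hLdef
  set A : ℤ := L - G with hAdef
  have hm0 : (0:ℤ) < (m:ℤ) := by exact_mod_cast hm
  have hFle : (F:ℝ) ≤ q^2 := Int.floor_le _
  have hFgt : q^2 - 1 < (F:ℝ) := Int.sub_one_lt_floor _
  have hSge : q^2 ≤ (S:ℝ) := Int.le_ceil _
  have hSlt : (S:ℝ) < q^2 + 1 := Int.ceil_lt_add_one _
  have hGle : (G:ℝ) ≤ q := Int.floor_le _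
  have hGgt : q - 1 < (G:ℝ) := Int.sub_one_lt_floor _
  have hdm := Int.mul_ediv_add_emod F (m:ℤ)
  rw [← hLdef] at hdm
  have hmod1 : 0 ≤ F % (m:ℤ) := Int.emod_nonneg F (by omega)
  have hmod2 : F % (m:ℤ) < (m:ℤ) := Int.emod_lt_of_pos F hm0
  have hmL : (m:ℤ) * L ≤ F := by omega
  have hmL2 : F < (m:ℤ) * L + (m:ℤ) := by omega
  have hmq : (m:ℝ) = c * q := hmeq
  -- key real inequalities
  have hcq : q^2 - 1 - c*q < c*q*(L:ℝ) := by
    have h := hmL2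
    have h' : (F:ℝ) < (m:ℝ) * (L:ℝ) + (m:ℝ) := by exact_mod_cast h
    rw [hmq] at h'
    nlinarith [hFgt]
  have hA4 : 3*q - 8 ≤ 4*c*(A:ℝ) := by
    have hAr : (A:ℝ) = (L:ℝ) - (G:ℝ) := by exact_mod_cast congrArg (Int.cast : ℤ → ℝ) hAdef
    have hstep : q * (3*q - 8) ≤ q * (4*c*(A:ℝ)) := by
      nlinarith [hcq, hq16, hAr,
        mul_le_mul_of_nonneg_left hGle (show (0:ℝ) ≤ 4*c*q by positivity),
        mul_nonneg (show (0:ℝ) ≤ 1-4*c by linarith) (mul_pos hq0 hq0).le]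
    exact le_of_mul_le_mul_left hstep hq0
  have hG2pos : (0:ℝ) < (G:ℝ) - 2 := by linarith
  have hkey1 : (3*q-8)*(q-3) ≤ (4*c*(A:ℝ))*((G:ℝ)-2) :=
    mul_le_mul hA4 (by linarith) (by linarith) (by linarith)
  have hkey4 : q^2 ≤ 4*c*((A:ℝ)*((G:ℝ)-2)) := by nlinarith [hkey1, hq16]
  have hApos : (0:ℝ) < (A:ℝ) := by
    by_contra hcon
    push_neg at hcon
    nlinarith [hA4, hq16, mul_nonpos_of_nonneg_of_nonpos (show (0:ℝ) ≤ 4*c by linarith) hcon]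
  have hA1 : (1:ℤ) ≤ A := by
    have : (0:ℤ) < A := by exact_mod_cast hApos
    omega
  have hG3 : (3:ℤ) ≤ G := by
    have : (3:ℝ) ≤ (G:ℝ) := by linarith
    exact_mod_cast this
  have hS1 : (1:ℤ) ≤ S := by
    have : (1:ℝ) ≤ (S:ℝ) := by nlinarith [hSge, hq16]
    exact_mod_cast this
  have hL4 : (4:ℤ) ≤ L := by omega
  -- the injection
  set t0 : Fin e := ⟨e-1, by omega⟩ with ht0def
  have ht0 : ((t0 : Fin e) : ℕ) = e - 1 := rfl
  set Φ : (Fin m → ℤ) × (Fin m → Fin e → ℤ) → (Fin m → ℤ) × (Fin m → Fin e → ℤ) :=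
    fun y => (fun i => S + (i:ℤ)*L + y.1 i,
              fun i t => if (t:ℕ) = e - 1 then S + (i:ℤ)*L + y.1 i + y.2 i t else y.2 i t)
    with hΦdef
  set Pfin : Finset ((Fin m → ℤ) × (Fin m → Fin e → ℤ)) :=
    (Fintype.piFinset fun _ : Fin m => Finset.Icc (0:ℤ) (A-1)) ×ˢ
      (Fintype.piFinset fun _ : Fin m => Fintype.piFinset fun t : Fin e =>
        if (t:ℕ) = e - 1 then Finset.Icc (3:ℤ) G else Finset.Icc (1:ℤ) S) with hPdef
  have hinj : Function.Injective Φ := by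
    intro y y' h
    have h1 := congrArg Prod.fst h
    have h2 := congrArg Prod.snd h
    simp only [hΦdef] at h1 h2
    have hy1 : y.1 = y'.1 := by
      funext i
      have := congrFun h1 i
      try simp only at this
      omega
    refine Prod.ext hy1 ?_
    funext i t
    have := congrFun (congrFun h2 i) t
    try simp only at this
    have h1i := congrFun hy1 i
    by_cases ht : (t:ℕ) = e - 1
    · rw [if_pos ht, if_pos ht] at this; omega
    · rw [if_neg ht, if_neg ht] at this; exact this
  -- name the target set
  set T : Set ((Fin m → ℤ) × (Fin m → Fin e → ℤ)) :=
    {x : (Fin m → ℤ) × (Fin m → Fin e → ℤ) |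
            (∀ i, 1 ≤ x.1 i) ∧ (∀ i t, 1 ≤ x.2 i t) ∧
            ∃ b : Fin m → ℤ,
              (∀ i, (∀ t, x.2 i t ≤ b i) ∧ ∃ t, x.2 i t = b i) ∧
              q^2 ≤ ((x.1 ⟨0, hm⟩ : ℤ) : ℝ) ∧
              (∀ i, x.1 i < b i) ∧
              (∀ i : Fin m, ∀ h : (i : ℕ) + 1 < m, b i ≤ x.1 ⟨(i : ℕ) + 1, h⟩) ∧
              ((b ⟨m - 1, Nat.sub_lt hm Nat.one_pos⟩ : ℤ) : ℝ) ≤ 2 * q^2 ∧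
              (∀ i, 3 ≤ b i - x.1 i ∧
                ((b i - x.1 i : ℤ) : ℝ) ≤ q)} with hT
  -- the target set is finite
  have hfinT : T.Finite := by
    set B : ℤ := ⌊2*q^2⌋ with hB
    apply Set.Finite.subset ((Set.Finite.pi fun _ : Fin m => Set.finite_Icc (1:ℤ) B).prod
      (Set.Finite.pi fun _ : Fin m => Set.Finite.pi fun _ : Fin e => Set.finite_Icc (1:ℤ) B))
    rintro x hx
    rw [hT] at hx
    obtain ⟨h1, h2, b, hbmax, ha1, hab, hba, hlast, hgaps⟩ := hx
    have hmono : ∀ j : ℕ, ∀ hj : j < m, ∀ i : ℕ, ∀ hi : i < m, i ≤ j →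
        b ⟨i, hi⟩ ≤ b ⟨j, hj⟩ := by
      intro j
      induction j with
      | zero =>
        intro hj i hi hij
        have hi0 : i = 0 := by omega
        subst hi0
        exact le_refl _
      | succ n ih =>
        intro hj i hi hij
        rcases Nat.lt_or_ge i (n+1) with hlt | hge
        · have hn : n < m := by omega
          have h1' : b ⟨i, hi⟩ ≤ b ⟨n, hn⟩ := ih hn i hi (by omega)
          have h2' : b ⟨n, hn⟩ ≤ x.1 ⟨n+1, hj⟩ := hba ⟨n, hn⟩ hj
          have h3' : x.1 ⟨n+1, hj⟩ < b ⟨n+1, hj⟩ := hab ⟨n+1, hj⟩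
          omega
        · have hieq : i = n+1 := by omega
          subst hieq
          exact le_refl _
    have hbB : ∀ i : Fin m, b i ≤ B := by
      intro i
      have hi2 := i.2
      have h1' := hmono (m-1) (Nat.sub_lt hm Nat.one_pos) i hi2 (by omega)
      have h2' : b ⟨m-1, Nat.sub_lt hm Nat.one_pos⟩ ≤ B := Int.le_floor.mpr hlast
      simp only [Fin.eta] at h1'
      omega
    simp only [Set.mem_prod, Set.mem_pi, Set.mem_univ, forall_const, Set.mem_Icc,
      true_implies]
    constructor
    · intro i
      have := hab i
      have := hbB i
      exact ⟨h1 i, by omega⟩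
    · intro i t
      exact ⟨h2 i t, le_trans ((hbmax i).1 t) (hbB i)⟩
  -- the image of the parameter finset lies in T
  have himg : ∀ y ∈ Pfin, Φ y ∈ T := by
    intro y hy
    rw [hPdef, Finset.mem_product] at hy
    obtain ⟨hy1, hy2⟩ := hy
    rw [Fintype.mem_piFinset] at hy1
    rw [Fintype.mem_piFinset] at hy2
    have hα : ∀ i, 0 ≤ y.1 i ∧ y.1 i ≤ A - 1 := by
      intro i; have := hy1 i; rwa [Finset.mem_Icc] at this
    have hy2' : ∀ i, ∀ t : Fin e,
        y.2 i t ∈ (if (t:ℕ) = e - 1 then Finset.Icc (3:ℤ) G else Finset.Icc (1:ℤ) S) := by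
      intro i t
      have := hy2 i
      rw [Fintype.mem_piFinset] at this
      exact this t
    have hγ : ∀ i, 3 ≤ y.2 i t0 ∧ y.2 i t0 ≤ G := by
      intro i; have := hy2' i t0; rwa [if_pos ht0, Finset.mem_Icc] at this
    have hfree : ∀ i, ∀ t : Fin e, (t:ℕ) ≠ e - 1 → 1 ≤ y.2 i t ∧ y.2 i t ≤ S := by
      intro i t ht; have := hy2' i t; rwa [if_neg ht, Finset.mem_Icc] at this
    have hiL : ∀ i : Fin m, 0 ≤ (i:ℤ)*L :=
      fun i => mul_nonneg (by exact_mod_cast Nat.zero_le _) (by omega)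
    rw [hT]
    simp only [hΦdef, Set.mem_setOf_eq]
    refine ⟨?_, ?_, fun i => S + (i:ℤ)*L + y.1 i + y.2 i t0, ?_, ?_, ?_, ?_, ?_, ?_⟩
    · intro i
      linarith [hiL i, (hα i).1, hS1]
    · intro i t
      by_cases h : (t:ℕ) = e - 1
      · rw [if_pos h]
        have h3 := hy2' i t
        rw [if_pos h, Finset.mem_Icc] at h3
        linarith [hiL i, (hα i).1, hS1, h3.1]
      · rw [if_neg h]
        exact (hfree i t h).1
    · intro i
      constructor
      · intro t
        dsimp only
        by_cases h : (t:ℕ) = e - 1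
        · rw [if_pos h]
          have hteq : t = t0 := by
            apply Fin.ext
            rw [ht0]
            exact h
          rw [hteq]
        · rw [if_neg h]
          linarith [(hfree i t h).2, hiL i, (hα i).1, (hγ i).1]
      · exact ⟨t0, by dsimp only; rw [if_pos ht0]⟩
    · have h0 : (((⟨0, hm⟩ : Fin m)):ℤ) = 0 := rfl
      rw [h0]
      have hy0 : (0:ℝ) ≤ ((y.1 ⟨0,hm⟩ : ℤ) : ℝ) := by exact_mod_cast (hα ⟨0,hm⟩).1
      push_cast
      push_cast at hy0
      linarith [hSge]
    · intro i
      dsimp only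
      linarith [(hγ i).1]
    · intro i h
      dsimp only
      have hc1 : ((⟨(i:ℕ)+1, h⟩ : Fin m) : ℤ) = (i:ℤ) + 1 := by
        have : ((⟨(i:ℕ)+1, h⟩ : Fin m) : ℕ) = (i:ℕ)+1 := rfl
        omega
      rw [hc1]
      have hr : ((i:ℤ)+1)*L = (i:ℤ)*L + L := by ring
      linarith [(hα i).2, (hγ i).2, (hα ⟨(i:ℕ)+1, h⟩).1, hAdef, hr]
    · have hval : ((⟨m-1, Nat.sub_lt hm Nat.one_pos⟩ : Fin m) : ℤ) = (m:ℤ) - 1 := by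
        have : ((⟨m-1, Nat.sub_lt hm Nat.one_pos⟩ : Fin m) : ℕ) = m-1 := rfl
        omega
      set i' : Fin m := ⟨m-1, Nat.sub_lt hm Nat.one_pos⟩ with hi'
      have hr : ((m:ℤ)-1)*L = (m:ℤ)*L - L := by ring
      have hZ : S + (i':ℤ)*L + y.1 i' + y.2 i' t0 ≤ S + F - 1 := by
        rw [hval]
        have h1' := (hα i').2
        have h2' := (hγ i').2
        linarith [hmL, hr, hAdef]
      have hZR : ((S + (i':ℤ)*L + y.1 i' + y.2 i' t0 : ℤ):ℝ) ≤ ((S + F - 1 : ℤ):ℝ) := by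
        exact_mod_cast hZ
      dsimp only
      push_cast at hZR ⊢
      linarith [hSlt, hFle]
    · intro i
      dsimp only
      constructor
      · linarith [(hγ i).1]
      · have h1' : ((y.2 i t0 : ℤ):ℝ) ≤ (G:ℝ) := by exact_mod_cast (hγ i).2
        push_cast
        linarith [hGle]
  -- cardinality of the parameter finset
  have hcard : Pfin.card = (A.toNat * ((G-2).toNat * S.toNat^(e-1)))^m := by
    have hIcc1 : (Finset.Icc (0:ℤ) (A-1)).card = A.toNat := by
      rw [Int.card_Icc]; congr 1; ring
    have hIcc2 : (Finset.Icc (3:ℤ) G).card = (G-2).toNat := by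
      rw [Int.card_Icc]; congr 1; ring
    have hIcc3 : (Finset.Icc (1:ℤ) S).card = S.toNat := by
      rw [Int.card_Icc]; congr 1; ring
    have hinner : ∀ _i : Fin m, (Fintype.piFinset fun t : Fin e =>
        if (t:ℕ) = e - 1 then Finset.Icc (3:ℤ) G else Finset.Icc (1:ℤ) S).card
        = (G-2).toNat * S.toNat^(e-1) := by
      intro _i
      rw [Fintype.card_piFinset]
      have hswap : ∀ t : Fin e,
          (if (t:ℕ) = e - 1 then Finset.Icc (3:ℤ) G else Finset.Icc (1:ℤ) S).card
          = (if t = t0 then (G-2).toNat else S.toNat) := by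
        intro t
        by_cases h : (t:ℕ) = e - 1
        · rw [if_pos h, hIcc2, if_pos (Fin.ext (h.trans ht0.symm))]
        · rw [if_neg h, if_neg (fun hh => h (by rw [hh, ht0])), hIcc3]
      rw [Finset.prod_congr rfl fun t _ => hswap t]
      rw [← Finset.mul_prod_erase Finset.univ _ (Finset.mem_univ t0), if_pos rfl]
      congr 1
      rw [Finset.prod_congr rfl (fun t ht => if_neg (Finset.ne_of_mem_erase ht)),
          Finset.prod_const, Finset.card_erase_of_mem (Finset.mem_univ t0),
          Finset.card_univ, Fintype.card_fin]
    rw [hPdef, Finset.card_product, Fintype.card_piFinset, Fintype.card_piFinset]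
    rw [Finset.prod_congr rfl fun i _ => hIcc1, Finset.prod_congr rfl fun i _ => hinner i,
        Finset.prod_const, Finset.prod_const, Finset.card_univ, Fintype.card_fin, ← mul_pow]
  -- conclude
  have hAt : ((A.toNat:ℤ)) = A := Int.toNat_of_nonneg (by omega)
  have hGt : (((G-2).toNat:ℤ)) = G-2 := Int.toNat_of_nonneg (by omega)
  have hSt : ((S.toNat:ℤ)) = S := Int.toNat_of_nonneg (by omega)
  calc (1/(4*c*p))^m ≤ ((Pfin.card : ℕ):ℝ) := by
        have cA : ((A.toNat : ℕ) : ℝ) = (A:ℝ) := by exact_mod_cast congrArg (fun z : ℤ => (z:ℝ)) hAt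
        have cG : (((G-2).toNat : ℕ) : ℝ) = (G:ℝ) - 2 := by
          exact_mod_cast congrArg (fun z : ℤ => (z:ℝ)) hGt
        have cS : ((S.toNat : ℕ) : ℝ) = (S:ℝ) := by exact_mod_cast congrArg (fun z : ℤ => (z:ℝ)) hSt
        rw [hcard, Nat.cast_pow, Nat.cast_mul, Nat.cast_mul, Nat.cast_pow, cA, cG, cS]
        refine pow_le_pow_left₀ (by positivity) ?_ m
        have hqe' : q^(2*e) * p = 1 := by rw [hqe]; field_simp
        rw [div_le_iff₀ (by positivity)]
        have hpow : (q^2)^(e-1) ≤ (S:ℝ)^(e-1) := pow_le_pow_left₀ (by positivity) hSge _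
        have hsplit : q^(2*e) = q^2 * (q^2)^(e-1) := by
          rw [← pow_mul, ← pow_add]
          congr 1
          omega
        have hbig : q^(2*e) ≤ (A:ℝ)*(((G:ℝ)-2)*(S:ℝ)^(e-1)) * (4*c) := by
          calc q^(2*e) = q^2 * (q^2)^(e-1) := hsplit
            _ ≤ (4*c*((A:ℝ)*((G:ℝ)-2))) * ((S:ℝ)^(e-1)) :=
                mul_le_mul hkey4 hpow (by positivity)
                  (mul_nonneg (by linarith : (0:ℝ) ≤ 4*c)
                    (mul_nonneg hApos.le hG2pos.le))
            _ = (A:ℝ)*(((G:ℝ)-2)*(S:ℝ)^(e-1)) * (4*c) := by ring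
        calc (1:ℝ) = q^(2*e) * p := hqe'.symm
          _ ≤ ((A:ℝ)*(((G:ℝ)-2)*(S:ℝ)^(e-1)) * (4*c)) * p :=
              mul_le_mul_of_nonneg_right hbig hp.le
          _ = _ := by ring
    _ ≤ ((T.ncard : ℕ):ℝ) := by
        have h1 : Pfin.card = (Pfin.image Φ).card :=
          (Finset.card_image_of_injective _ hinj).symm
        have hsub : ↑(Pfin.image Φ) ⊆ T := by
          intro x hx
          simp only [Finset.coe_image, Set.mem_image, Finset.mem_coe] at hx
          obtain ⟨y, hy, rfl⟩ := hx
          exact himg y hy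
        have h2 := Set.ncard_le_ncard hsub hfinT
        rw [Set.ncard_coe_finset] at h2
        rw [h1]
        exact_mod_cast h2


end Boot
end
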